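/- arXiv:2003.08304 — 3 statements merged into one kernel-verified Lean document; each statement's English description precedes it below -/
import Mathlib

section
/- Let T_N(K) be the K-th order statistic of N i.i.d. shifted exponential variables with rate λ_s > 0 and shift c ≥ 0, and let T_D > c. Conditioning on the event {T_N(K) < T_D}, the conditional expectation of T_N(K) is E[T_N(K) | T_N(K) < T_D] = (1/(1-Z_K)) · Σ_{j=0}^{K-1} (B_{K,j}/(λ_s U_{K,j}²)) · [1 + c λ_s U_{K,j} - (1 + T_D λ_s U_{K,j}) e^{-λ_s U_{K,j}(T_D-c)}], where B_{K,j} = K·binom(N,K)·binom(K-1,j)·(-1)^j, U_{K,j} = N-K+1+j, and Z_K = Σ_{i=0}^{K-1} B_{K,i}·e^{-λ_s U_{K,i}(T_D-c)}/U_{K,i}. -/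
open MeasureTheory ProbabilityTheory Real Set Filter
open scoped ENNReal NNReal

noncomputable def shiftedExp (l c : ℝ) : MeasureTheory.Measure ℝ :=
  MeasureTheory.volume.withDensity
    (fun t => ENNReal.ofReal (if c < t then l * Real.exp (-l * (t - c)) else 0))

section exp

lemma cont_expShift (a c : ℝ) : Continuous (fun t : ℝ => Real.exp (-a * (t - c))) :=
  Real.continuous_exp.comp (continuous_const.mul (continuous_id.sub continuous_const))

lemma hasDerivAt_negexp (a c : ℝ) (x : ℝ) :
    HasDerivAt (fun t => -Real.exp (-a * (t - c))) (a * Real.exp (-a * (x - c))) x := by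
  have h1 : HasDerivAt (fun t : ℝ => -a * (t - c)) (-a) x := by
    simpa using ((hasDerivAt_id x).sub_const c).const_mul (-a)
  have := (h1.exp).fun_neg
  convert! this using 1
  ring

lemma tendsto_expShift_atTop (a c : ℝ) (ha : 0 < a) :
    Tendsto (fun t : ℝ => Real.exp (-a * (t - c))) atTop (nhds 0) := by
  have h2 : Tendsto (fun t : ℝ => t - c) atTop atTop := tendsto_atTop_add_const_right _ _ tendsto_id
  have h : Tendsto (fun t : ℝ => -a * (t - c)) atTop atBot :=
    h2.const_mul_atTop_of_neg (by linarith)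
  exact Real.tendsto_exp_atBot.comp h

lemma integrableOn_expShift {a : ℝ} (ha : 0 < a) (c b : ℝ) :
    IntegrableOn (fun t => Real.exp (-a * (t - c))) (Ioi b) := by
  have : (fun t : ℝ => Real.exp (-a * (t - c))) = fun t => Real.exp (a*c) * Real.exp (-a * t) := by
    funext t; rw [← Real.exp_add]; ring_nf
  rw [this]
  exact (exp_neg_integrableOn_Ioi b ha).const_mul _

lemma integral_expShift_Ioi {a : ℝ} (ha : 0 < a) (c b : ℝ) :
    ∫ t in Ioi b, a * Real.exp (-a * (t - c)) = Real.exp (-a * (b - c)) := by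
  have h := integral_Ioi_of_hasDerivAt_of_tendsto (f := fun t => -Real.exp (-a * (t - c)))
      (f' := fun t => a * Real.exp (-a * (t - c))) (a := b) (m := 0)
      ((cont_expShift a c).neg.continuousOn.continuousWithinAt (by simp))
      (fun x _ => hasDerivAt_negexp a c x)
      ((integrableOn_expShift ha c b).const_mul a)
      (by simpa using (tendsto_expShift_atTop a c ha).neg)
  rw [h]; simp

lemma intervalIntegral_expShift (a c b x : ℝ) :
    ∫ t in b..x, a * Real.exp (-a * (t - c))
      = Real.exp (-a * (b - c)) - Real.exp (-a * (x - c)) := by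
  have := intervalIntegral.integral_eq_sub_of_hasDerivAt
    (f := fun t => -Real.exp (-a * (t - c))) (f' := fun t => a * Real.exp (-a * (t - c)))
    (a := b) (b := x) (fun t _ => hasDerivAt_negexp a c t)
    ((continuous_const.mul (cont_expShift a c)).intervalIntegrable _ _)
  rw [this]; ring

end exp

section dens
variable (l c : ℝ)

noncomputable def sExpDens (t : ℝ) : ℝ := if c < t then l * Real.exp (-l * (t - c)) else 0

lemma sExpDens_eq_indicator :
    sExpDens l c = Set.indicator (Ioi c) (fun t => l * Real.exp (-l * (t - c))) := by
  funext t
  simp [sExpDens, Set.indicator_apply, Set.mem_Ioi]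

lemma sExpDens_nonneg (hl : 0 < l) (t : ℝ) : 0 ≤ sExpDens l c t := by
  unfold sExpDens
  split <;> positivity

lemma measurable_sExpDens : Measurable (sExpDens l c) := by
  unfold sExpDens
  exact Measurable.ite measurableSet_Ioi (by fun_prop) measurable_const

variable {l c}

lemma integrableOn_sExpDens_Ioi (hl : 0 < l) : IntegrableOn (fun t => l * Real.exp (-l * (t - c))) (Ioi c) :=
  (integrableOn_expShift hl c c).const_mul l

lemma shiftedExp_apply_meas (hl : 0 < l) {s : Set ℝ} (hs : MeasurableSet s) :
    shiftedExp l c s = ENNReal.ofReal (∫ t in s ∩ Ioi c, l * Real.exp (-l * (t - c))) := by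
  rw [shiftedExp]
  rw [withDensity_apply _ hs]
  have h1 : ∀ t, ENNReal.ofReal (if c < t then l * Real.exp (-l * (t - c)) else 0)
      = ENNReal.ofReal (sExpDens l c t) := fun t => rfl
  simp only [h1, sExpDens_eq_indicator]
  rw [show (fun t => ENNReal.ofReal ((Ioi c).indicator (fun t => l * Real.exp (-l * (t - c))) t))
      = (Ioi c).indicator (fun t => ENNReal.ofReal (l * Real.exp (-l * (t - c)))) by
    funext t; by_cases h : t ∈ Ioi c <;> simp [h]]
  rw [lintegral_indicator measurableSet_Ioi, Measure.restrict_restrict measurableSet_Ioi, Set.inter_comm]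
  rw [← ofReal_integral_eq_lintegral_ofReal
    ((integrableOn_sExpDens_Ioi hl).mono_set (inter_subset_right))
    (Filter.Eventually.of_forall fun t => by positivity)]

lemma shiftedExp_univ (hl : 0 < l) : shiftedExp l c univ = 1 := by
  rw [shiftedExp_apply_meas hl MeasurableSet.univ, univ_inter, integral_expShift_Ioi hl]
  simp

lemma shiftedExp_prob (hl : 0 < l) : IsProbabilityMeasure (shiftedExp l c) :=
  ⟨shiftedExp_univ hl⟩

lemma shiftedExp_Iic_of_le (hl : 0 < l) {x : ℝ} (hx : c ≤ x) :
    shiftedExp l c (Iic x) = ENNReal.ofReal (1 - Real.exp (-l * (x - c))) := by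
  rw [shiftedExp_apply_meas hl measurableSet_Iic]
  have : Iic x ∩ Ioi c = Ioc c x := by ext t; simp [mem_Ioc, and_comm]
  rw [this, ← intervalIntegral.integral_of_le hx, intervalIntegral_expShift]
  simp

lemma shiftedExp_Iic_of_lt (hl : 0 < l) {x : ℝ} (hx : x < c) : shiftedExp l c (Iic x) = 0 := by
  rw [shiftedExp_apply_meas hl measurableSet_Iic]
  have : Iic x ∩ Ioi c = ∅ := by
    ext t; simp only [mem_inter_iff, mem_Iic, mem_Ioi, mem_empty_iff_false, iff_false, not_and]
    intro h; linarith
  simp [this]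

lemma shiftedExp_Ioi_of_le (hl : 0 < l) {x : ℝ} (hx : c ≤ x) :
    shiftedExp l c (Ioi x) = ENNReal.ofReal (Real.exp (-l * (x - c))) := by
  rw [shiftedExp_apply_meas hl measurableSet_Ioi]
  have : Ioi x ∩ Ioi c = Ioi x := inter_eq_left.mpr (fun t ht => lt_of_le_of_lt hx ht)
  rw [this, integral_expShift_Ioi hl]

lemma shiftedExp_singleton (x : ℝ) : shiftedExp l c {x} = 0 := by
  rw [shiftedExp]
  rw [withDensity_apply _ (measurableSet_singleton x)]
  rw [Measure.restrict_eq_zero.mpr (by simp), lintegral_zero_measure]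
end dens

noncomputable def orderStat {Ω : Type*} {N : ℕ} (T : Fin N → Ω → ℝ) (K : ℕ) (ω : Ω) : ℝ :=
  sInf {x : ℝ | K ≤ Nat.card {i : Fin N // T i ω ≤ x}}

section comb
variable {N K : ℕ}

open Classical in
noncomputable def cnt (v : Fin N → ℝ) (x : ℝ) : ℕ := (Finset.univ.filter fun i => v i ≤ x).card

noncomputable def osF (K : ℕ) (v : Fin N → ℝ) : ℝ := orderStat (fun i (w : Fin N → ℝ) => w i) K v

lemma orderStat_eq_osF {Ω : Type*} (T : Fin N → Ω → ℝ) (K : ℕ) (ω : Ω) :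
    orderStat T K ω = osF K (fun i => T i ω) := rfl

open Classical in
lemma natcard_eq_cnt (v : Fin N → ℝ) (x : ℝ) :
    Nat.card {i : Fin N // v i ≤ x} = cnt v x := by
  rw [Nat.card_eq_fintype_card]
  convert Fintype.card_subtype (fun i => v i ≤ x)
  rw [cnt]

lemma osF_def (v : Fin N → ℝ) : osF K v = sInf {x : ℝ | K ≤ cnt v x} := by
  unfold osF orderStat
  congr 1
  ext x
  show K ≤ Nat.card {i : Fin N // v i ≤ x} ↔ _
  rw [natcard_eq_cnt]
  simp

open Classical in
lemma cnt_iff (v : Fin N → ℝ) (x : ℝ) :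
    K ≤ cnt v x ↔ ∃ s : Finset (Fin N), s.card = K ∧ ∀ i ∈ s, v i ≤ x := by
  constructor
  · intro h
    obtain ⟨t, hts, htc⟩ := Finset.exists_subset_card_eq h
    exact ⟨t, htc, fun i hi => (Finset.mem_filter.mp (hts hi)).2⟩
  · rintro ⟨s, hsc, hsx⟩
    calc K = s.card := hsc.symm
    _ ≤ _ := Finset.card_le_card (fun i hi => Finset.mem_filter.mpr ⟨Finset.mem_univ i, hsx i hi⟩)

noncomputable def sMax (v : Fin N → ℝ) (s : Finset (Fin N)) : ℝ :=
  if h : s.Nonempty then s.sup' h v else 0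

variable (hK : 1 ≤ K) (hKN : K ≤ N)
include hK hKN

omit hK in
lemma powersetCard_nonempty' : ((Finset.univ : Finset (Fin N)).powersetCard K).Nonempty :=
  Finset.powersetCard_nonempty.mpr (by simpa using hKN)

omit hKN in
lemma mem_powersetCard_nonempty {s : Finset (Fin N)}
    (hs : s ∈ (Finset.univ : Finset (Fin N)).powersetCard K) : s.Nonempty := by
  rw [Finset.mem_powersetCard] at hs
  exact Finset.card_pos.mp (hs.2 ▸ hK)

lemma cnt_iff' (v : Fin N → ℝ) (x : ℝ) :
    K ≤ cnt v x ↔ ((Finset.univ : Finset (Fin N)).powersetCard K).inf'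
      (powersetCard_nonempty' hKN) (sMax v) ≤ x := by
  rw [Finset.inf'_le_iff, cnt_iff]
  constructor
  · rintro ⟨s, hsc, hsx⟩
    refine ⟨s, Finset.mem_powersetCard.mpr ⟨Finset.subset_univ s, hsc⟩, ?_⟩
    have hne : s.Nonempty := Finset.card_pos.mp (hsc ▸ hK)
    rw [sMax, dif_pos hne, Finset.sup'_le_iff]
    exact hsx
  · rintro ⟨s, hs, hsx⟩
    have hne := mem_powersetCard_nonempty hK hs
    rw [sMax, dif_pos hne, Finset.sup'_le_iff] at hsx
    exact ⟨s, (Finset.mem_powersetCard.mp hs).2, hsx⟩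

lemma osF_eq_inf' (v : Fin N → ℝ) :
    osF K v = ((Finset.univ : Finset (Fin N)).powersetCard K).inf'
      (powersetCard_nonempty' hKN) (sMax v) := by
  rw [osF_def]
  have : {x : ℝ | K ≤ cnt v x} = Ici (((Finset.univ : Finset (Fin N)).powersetCard K).inf'
      (powersetCard_nonempty' hKN) (sMax v)) := by
    ext x
    rw [mem_Ici, mem_setOf_eq, cnt_iff' hK hKN]
  rw [this, csInf_Ici]

lemma osF_le_iff (v : Fin N → ℝ) (x : ℝ) : osF K v ≤ x ↔ K ≤ cnt v x := by
  rw [osF_eq_inf' hK hKN, cnt_iff' hK hKN]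

lemma osF_exists_coord (v : Fin N → ℝ) : ∃ i : Fin N, osF K v = v i := by
  rw [osF_eq_inf' hK hKN]
  obtain ⟨s, hs, hseq⟩ := Finset.exists_mem_eq_inf'
    (powersetCard_nonempty' (N := N) hKN) (sMax v)
  have hne := mem_powersetCard_nonempty hK hs
  obtain ⟨i, _, hieq⟩ := Finset.exists_mem_eq_sup' hne v
  exact ⟨i, by rw [hseq, sMax, dif_pos hne, hieq]⟩

open Classical in
omit hK hKN in
lemma measurableSet_cnt_ge (x : ℝ) : MeasurableSet {v : Fin N → ℝ | K ≤ cnt v x} := by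
  have : {v : Fin N → ℝ | K ≤ cnt v x}
      = ⋃ s ∈ ((Finset.univ : Finset (Fin N)).powersetCard K : Set (Finset (Fin N))),
        ⋂ i ∈ (s : Set (Fin N)), {v : Fin N → ℝ | v i ≤ x} := by
    ext v
    simp only [mem_setOf_eq, mem_iUnion, mem_iInter, Finset.mem_coe, Finset.mem_powersetCard,
      cnt_iff]
    constructor
    · rintro ⟨s, hsc, hsx⟩; exact ⟨s, ⟨Finset.subset_univ s, hsc⟩, hsx⟩
    · rintro ⟨s, ⟨_, hsc⟩, hsx⟩; exact ⟨s, hsc, hsx⟩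
  rw [this]
  refine MeasurableSet.biUnion (Set.Countable.mono (subset_univ _) (Set.countable_univ)) ?_
  intro s _
  refine MeasurableSet.biInter (Set.Countable.mono (subset_univ _) (Set.countable_univ)) ?_
  intro i _
  exact measurableSet_le (measurable_pi_apply i) measurable_const

lemma measurable_osF : Measurable (osF K : (Fin N → ℝ) → ℝ) := by
  apply measurable_of_Iic
  intro x
  have : osF K ⁻¹' Iic x = {v : Fin N → ℝ | K ≤ cnt v x} := by
    ext v; simp [osF_le_iff hK hKN]
  rw [this]
  exact measurableSet_cnt_ge x

end comb

section counting
variable {N K : ℕ} {μ0 : Measure ℝ} [IsProbabilityMeasure μ0]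

open Classical in
/-- measure of the event that at least K of N iid coordinates are ≤ x -/
lemma pi_cnt_ge_measure (x : ℝ) :
    (Measure.pi fun _ : Fin N => μ0) {v : Fin N → ℝ | K ≤ cnt v x}
      = ∑ m ∈ Finset.Icc K N,
        (N.choose m : ℝ≥0∞) * (μ0 (Iic x))^m * (μ0 (Ioi x))^(N-m) := by
  classical
  set p : ℝ≥0∞ := μ0 (Iic x) with hp
  set q : ℝ≥0∞ := μ0 (Ioi x) with hq
  set E : Finset (Fin N) → Set (Fin N → ℝ) :=
    fun S => Set.univ.pi (fun i => if i ∈ S then Iic x else Ioi x) with hE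
  have hmemE : ∀ S v, v ∈ E S ↔ ∀ i, (i ∈ S → v i ≤ x) ∧ (i ∉ S → x < v i) := by
    intro S v
    simp only [hE, Set.mem_pi, Set.mem_univ, forall_true_left]
    constructor
    · intro h i
      constructor
      · intro hi; have := h i; rwa [if_pos hi] at this
      · intro hi; have := h i; rwa [if_neg hi] at this
    · intro h i
      by_cases hi : i ∈ S
      · rw [if_pos hi]; exact (h i).1 hi
      · rw [if_neg hi]; exact (h i).2 hi
  have hEfilter : ∀ S v, v ∈ E S ↔ (Finset.univ.filter fun i => v i ≤ x) = S := by
    intro S v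
    rw [hmemE]
    constructor
    · intro h
      ext i
      simp only [Finset.mem_filter, Finset.mem_univ, true_and]
      constructor
      · intro hvi
        by_contra hi
        exact absurd hvi (not_le.mpr ((h i).2 hi))
      · exact (h i).1
    · intro h i
      constructor
      · intro hi
        have : i ∈ Finset.univ.filter fun i => v i ≤ x := h ▸ hi
        exact (Finset.mem_filter.mp this).2
      · intro hi
        by_contra hvx
        exact hi (h ▸ Finset.mem_filter.mpr ⟨Finset.mem_univ i, not_lt.mp hvx⟩)
  set F : Finset (Finset (Fin N)) := Finset.univ.powerset.filter (fun S => K ≤ S.card) with hF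
  have hset : {v : Fin N → ℝ | K ≤ cnt v x} = ⋃ S ∈ F, E S := by
    ext v
    simp only [mem_setOf_eq, mem_iUnion, exists_prop, hF, Finset.mem_filter,
      Finset.mem_powerset]
    constructor
    · intro h
      exact ⟨Finset.univ.filter fun i => v i ≤ x,
        ⟨Finset.subset_univ _, h⟩, (hEfilter _ v).mpr rfl⟩
    · rintro ⟨S, ⟨_, hcard⟩, hv⟩
      have := (hEfilter S v).mp hv
      show K ≤ cnt v x
      rw [cnt]
      convert hcard.trans_eq (congrArg Finset.card this.symm) using 2
  rw [hset]
  have hEmeas : ∀ S, MeasurableSet (E S) := by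
    intro S
    apply MeasurableSet.univ_pi
    intro i
    by_cases hi : i ∈ S
    · rw [if_pos hi]; exact measurableSet_Iic
    · rw [if_neg hi]; exact measurableSet_Ioi
  have hdisj : (F : Set (Finset (Fin N))).PairwiseDisjoint E := by
    intro S _ S' _ hne
    apply Set.disjoint_left.mpr
    intro v hv hv'
    exact hne (((hEfilter S v).mp hv).symm.trans ((hEfilter S' v).mp hv'))
  rw [measure_biUnion_finset hdisj (fun S _ => hEmeas S)]
  have hμE : ∀ S : Finset (Fin N), (Measure.pi fun _ : Fin N => μ0) (E S)
      = p ^ S.card * q ^ (N - S.card) := by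
    intro S
    rw [hE, Measure.pi_pi]
    have : ∀ i, μ0 (if i ∈ S then Iic x else Ioi x) = if i ∈ S then p else q := by
      intro i; split <;> rfl
    simp only [this]
    rw [Finset.prod_ite, Finset.prod_const, Finset.prod_const]
    have h1 : Finset.univ.filter (fun i => i ∈ S) = S := by ext i; simp
    have h2 : Finset.univ.filter (fun i => i ∉ S) = Sᶜ := by ext i; simp
    rw [h1, h2, Finset.card_compl, Fintype.card_fin]
  rw [Finset.sum_congr rfl (fun S _ => hμE S)]
  rw [← Finset.sum_fiberwise_of_maps_to (g := Finset.card) (t := Finset.Icc K N)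
    (fun S hS => ?_) (fun S => p ^ S.card * q ^ (N - S.card))]
  · apply Finset.sum_congr rfl
    intro m hm
    have hfil : F.filter (fun S => S.card = m) = Finset.univ.powersetCard m := by
      ext S
      simp only [hF, Finset.mem_filter, Finset.mem_powerset, Finset.mem_powersetCard]
      rw [Finset.mem_Icc] at hm
      constructor
      · rintro ⟨⟨hsub, _⟩, hcard⟩; exact ⟨hsub, hcard⟩
      · rintro ⟨hsub, hcard⟩; exact ⟨⟨hsub, hcard ▸ hm.1⟩, hcard⟩
    rw [hfil]
    have hconst : ∑ S ∈ (Finset.univ : Finset (Fin N)).powersetCard m, p ^ S.card * q ^ (N - S.card)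
        = ∑ _S ∈ (Finset.univ : Finset (Fin N)).powersetCard m, p ^ m * q ^ (N - m) :=
      Finset.sum_congr rfl (fun S hS => by rw [(Finset.mem_powersetCard.mp hS).2])
    rw [hconst, Finset.sum_const, Finset.card_powersetCard, Finset.card_univ, Fintype.card_fin,
      nsmul_eq_mul, mul_assoc]
  · rw [hF, Finset.mem_filter] at hS
    rw [Finset.mem_Icc]
    exact ⟨hS.2, by simpa using Finset.card_le_univ S⟩
end counting
section cdf
variable (N K : ℕ) (l c : ℝ)

noncomputable def qe (t : ℝ) : ℝ := Real.exp (-l * (t - c))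
noncomputable def Ff (t : ℝ) : ℝ := 1 - qe l c t
noncomputable def gCont (t : ℝ) : ℝ :=
  K * (N.choose K : ℝ) * (Ff l c t)^(K-1) * (qe l c t)^(N-K) * (l * qe l c t)
noncomputable def gd (t : ℝ) : ℝ := if c < t then gCont N K l c t else 0
noncomputable def Hc (t : ℝ) : ℝ :=
  ∑ m ∈ Finset.Icc K N, (N.choose m : ℝ) * ((Ff l c t)^m * (qe l c t)^(N-m))

variable {N K l c}

lemma qe_pos (t : ℝ) : 0 < qe l c t := Real.exp_pos _
lemma qe_le_one (hl : 0 < l) {t : ℝ} (ht : c ≤ t) : qe l c t ≤ 1 := by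
  rw [qe, Real.exp_le_one_iff]
  have : 0 ≤ l * (t - c) := by nlinarith
  linarith
lemma Ff_nonneg (hl : 0 < l) {t : ℝ} (ht : c ≤ t) : 0 ≤ Ff l c t := by
  have := qe_le_one hl ht; rw [Ff]; linarith
lemma Ff_lt_one (t : ℝ) : Ff l c t < 1 := by
  have := qe_pos (l := l) (c := c) t; rw [Ff]; linarith
lemma Ff_pos (hl : 0 < l) {t : ℝ} (ht : c < t) : 0 < Ff l c t := by
  rw [Ff, sub_pos, qe, Real.exp_lt_one_iff]
  nlinarith

lemma continuous_qe : Continuous (qe l c) := cont_expShift l c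
lemma continuous_Ff : Continuous (Ff l c) := continuous_const.sub continuous_qe
lemma continuous_gCont : Continuous (gCont N K l c) := by
  unfold gCont Ff qe
  fun_prop

lemma measurable_gd : Measurable (gd N K l c) :=
  Measurable.ite measurableSet_Ioi continuous_gCont.measurable measurable_const

lemma gCont_nonneg (hl : 0 < l) {t : ℝ} (ht : c ≤ t) : 0 ≤ gCont N K l c t := by
  rw [gCont]
  have h1 := Ff_nonneg hl ht (l := l)
  have h2 := (qe_pos (l := l) (c := c) t).le
  positivity

lemma gd_nonneg (hl : 0 < l) (t : ℝ) : 0 ≤ gd N K l c t := by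
  rw [gd]
  split
  · exact gCont_nonneg hl (le_of_lt (by assumption))
  · exact le_refl 0

lemma hasDerivAt_qe (t : ℝ) : HasDerivAt (qe l c) (-l * qe l c t) t := by
  have h1 : HasDerivAt (fun u : ℝ => -l * (u - c)) (-l) t := by
    simpa using ((hasDerivAt_id t).sub_const c).const_mul (-l)
  have h2 : qe l c = fun u => Real.exp (-l * (u - c)) := rfl
  rw [h2]
  convert h1.exp using 1
  simp only []; ring

lemma hasDerivAt_Ff (t : ℝ) : HasDerivAt (Ff l c) (l * qe l c t) t := by
  have h2 : Ff l c = fun u => 1 - qe l c u := rfl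
  rw [h2]
  convert! (hasDerivAt_const t (1:ℝ)).fun_sub (hasDerivAt_qe (l := l) (c := c) t) using 1
  ring

lemma hasDerivAt_Hc (hK : 1 ≤ K) (hKN : K ≤ N) (t : ℝ) :
    HasDerivAt (Hc N K l c) (gCont N K l c t) t := by
  classical
  set f := Ff l c t with hf
  set s := qe l c t with hs
  set A : ℕ → ℝ := fun m => m * (N.choose m : ℝ) * f^(m-1) * s^(N-m) * (l * s) with hA
  have hterm : ∀ m ∈ Finset.Icc K N,
      HasDerivAt (fun u => (N.choose m : ℝ) * ((Ff l c u)^m * (qe l c u)^(N-m)))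
        (A m - A (m+1)) t := by
    intro m hm
    rw [Finset.mem_Icc] at hm
    have hd := (((hasDerivAt_Ff (l := l) (c := c) t).fun_pow m).fun_mul
      ((hasDerivAt_qe (l := l) (c := c) t).fun_pow (N-m))).const_mul ((N.choose m : ℝ))
    convert! hd using 1
    have hcast : ((N - m : ℕ) : ℝ) * (N.choose m : ℝ)
        = ((m + 1 : ℕ) : ℝ) * (N.choose (m+1) : ℝ) := by
      have h2 : (N.choose (m+1) * (m+1) : ℕ) = (N.choose m * (N - m) : ℕ) :=
        Nat.choose_succ_right_eq N m
      have h3 := congrArg (fun n : ℕ => (n : ℝ)) h2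
      push_cast at h3 ⊢
      linarith
    have hsub1 : N - (m+1) = N - m - 1 := by omega
    have hsub2 : (m+1) - 1 = m := by omega
    rw [hA]
    simp only [hsub1, hsub2]
    rw [← hf, ← hs]
    push_cast
    push_cast at hcast
    linear_combination (f^m * s^(N-m-1) * (l*s)) * hcast
  have hsum := HasDerivAt.fun_sum hterm
  have htel : ∑ m ∈ Finset.Icc K N, (A m - A (m+1)) = A K - A (N+1) := by
    rw [show Finset.Icc K N = Finset.Ico K (N+1) by rw [Finset.Ico_add_one_right_eq_Icc]]
    rw [Finset.sum_Ico_eq_sum_range]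
    have h1 : ∀ i, A (K + i) - A (K + i + 1)
        = (fun j => A (K + j)) i - (fun j => A (K + j)) (i+1) := by
      intro i; simp [Nat.add_assoc]
    rw [Finset.sum_congr rfl (fun i _ => h1 i), Finset.sum_range_sub']
    simp only [Nat.add_zero]
    rw [show K + (N + 1 - K) = N + 1 by omega]
  have hAN1 : A (N+1) = 0 := by
    rw [hA]; simp [Nat.choose_succ_self]
  have hAK : A K = gCont N K l c t := by
    rw [hA, gCont, ← hf, ← hs]
  unfold Hc
  convert! hsum using 1
  rw [htel, hAN1, hAK, sub_zero]
end cdf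
section nu
variable {N K : ℕ} {l c : ℝ}

lemma Hc_at_c (hK : 1 ≤ K) : Hc N K l c c = 0 := by
  unfold Hc
  apply Finset.sum_eq_zero
  intro m hm
  have h0 : Ff l c c = 0 := by unfold Ff qe; simp
  have hm1 : m ≠ 0 := by
    rw [Finset.mem_Icc] at hm; omega
  rw [h0, zero_pow hm1, zero_mul, mul_zero]

lemma gd_eq_indicator : gd N K l c = (Ioi c).indicator (gCont N K l c) := by
  funext t
  simp [gd, indicator_apply, mem_Ioi]

lemma integral_gd_Iic (hK : 1 ≤ K) (hKN : K ≤ N) {x : ℝ} (hx : c ≤ x) :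
    ∫ t in Iic x, gd N K l c t = Hc N K l c x := by
  rw [gd_eq_indicator, setIntegral_indicator measurableSet_Ioi]
  have h1 : Iic x ∩ Ioi c = Ioc c x := by ext t; simp [mem_Ioc, and_comm]
  rw [h1, ← intervalIntegral.integral_of_le hx]
  rw [intervalIntegral.integral_eq_sub_of_hasDerivAt
    (fun t _ => hasDerivAt_Hc hK hKN t) (continuous_gCont.intervalIntegrable _ _)]
  rw [Hc_at_c hK, sub_zero]

lemma integrableOn_gd_Iic (x : ℝ) : IntegrableOn (gd N K l c) (Iic x) := by
  rw [gd_eq_indicator, IntegrableOn, integrable_indicator_iff measurableSet_Ioi,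
    IntegrableOn, Measure.restrict_restrict measurableSet_Ioi, Set.Ioi_inter_Iic]
  exact continuous_gCont.integrableOn_Ioc

lemma nu_Iic_of_le (hl : 0 < l) (hK : 1 ≤ K) (hKN : K ≤ N) {x : ℝ} (hx : c ≤ x) :
    (volume.withDensity fun t => ENNReal.ofReal (gd N K l c t)) (Iic x)
      = ENNReal.ofReal (Hc N K l c x) := by
  rw [withDensity_apply _ measurableSet_Iic,
    ← ofReal_integral_eq_lintegral_ofReal (integrableOn_gd_Iic x)
      (Filter.Eventually.of_forall fun t => gd_nonneg hl t),
    integral_gd_Iic hK hKN hx]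

lemma nu_Iic_of_lt (hl : 0 < l) {x : ℝ} (hx : x < c) :
    (volume.withDensity fun t => ENNReal.ofReal (gd N K l c t)) (Iic x) = 0 := by
  rw [withDensity_apply _ measurableSet_Iic]
  have h0 : ∀ᵐ t ∂(volume : Measure ℝ), t ∈ Iic x
      → ENNReal.ofReal (gd N K l c t) = (fun _ : ℝ => (0:ℝ≥0∞)) t := by
    apply ae_of_all
    intro t ht
    simp only [mem_Iic] at ht
    rw [gd, if_neg (by linarith)]
    simp
  rw [setLIntegral_congr_fun_ae measurableSet_Iic h0, lintegral_zero]

lemma nu_finite (hl : 0 < l) :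
    IsFiniteMeasure (volume.withDensity fun t => ENNReal.ofReal (gd N K l c t)) := by
  constructor
  rw [withDensity_apply _ MeasurableSet.univ, Measure.restrict_univ]
  have hbd : ∀ t, gd N K l c t ≤ (K * (N.choose K : ℝ)) * sExpDens l c t := by
    intro t
    rw [gd, sExpDens]
    split
    · rename_i ht
      rw [gCont]
      have h1 : Ff l c t ^ (K-1) ≤ 1 :=
        pow_le_one₀ (Ff_nonneg hl ht.le) (Ff_lt_one t).le
      have h2 : qe l c t ^ (N-K) ≤ 1 :=
        pow_le_one₀ (qe_pos t).le (qe_le_one hl ht.le)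
      have h3 : (0:ℝ) ≤ l * qe l c t := by
        have := (qe_pos (l := l) (c := c) t).le; positivity
      have h4 : (0:ℝ) ≤ (K : ℝ) * N.choose K := by positivity
      calc K * (N.choose K : ℝ) * (Ff l c t)^(K-1) * (qe l c t)^(N-K) * (l * qe l c t)
          ≤ K * (N.choose K : ℝ) * 1 * 1 * (l * qe l c t) := by
            apply mul_le_mul_of_nonneg_right _ h3
            apply mul_le_mul _ h2 (pow_nonneg (qe_pos t).le _) (by positivity)
            apply mul_le_mul_of_nonneg_left h1 h4
      _ = K * (N.choose K : ℝ) * (l * Real.exp (-l * (t - c))) := by rw [qe]; ring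
    · simp
  calc ∫⁻ t, ENNReal.ofReal (gd N K l c t)
      ≤ ∫⁻ t, ENNReal.ofReal ((K * (N.choose K : ℝ)) * sExpDens l c t) := by
        exact lintegral_mono fun t => ENNReal.ofReal_le_ofReal (hbd t)
    _ = ∫⁻ t, ENNReal.ofReal (K * (N.choose K : ℝ)) * ENNReal.ofReal (sExpDens l c t) := by
        apply lintegral_congr
        intro t
        rw [ENNReal.ofReal_mul (by positivity)]
    _ = ENNReal.ofReal (K * (N.choose K : ℝ)) * ∫⁻ t, ENNReal.ofReal (sExpDens l c t) := by
        rw [lintegral_const_mul _ ((measurable_sExpDens l c).ennreal_ofReal)]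
    _ < ⊤ := by
        have h5 : ∫⁻ t, ENNReal.ofReal (sExpDens l c t) = shiftedExp l c univ := by
          rw [shiftedExp, withDensity_apply _ MeasurableSet.univ, Measure.restrict_univ]
          rfl
        rw [h5, shiftedExp_univ hl]
        simp [ENNReal.ofReal_lt_top, ENNReal.mul_lt_top]

lemma law_osF (hl : 0 < l) (hK : 1 ≤ K) (hKN : K ≤ N) :
    Measure.map (osF K) (Measure.pi fun _ : Fin N => shiftedExp l c)
      = volume.withDensity (fun t => ENNReal.ofReal (gd N K l c t)) := by
  haveI : IsProbabilityMeasure (shiftedExp l c) := shiftedExp_prob hl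
  haveI := nu_finite (N := N) (K := K) (c := c) hl
  haveI : IsProbabilityMeasure (Measure.map (osF K) (Measure.pi fun _ : Fin N => shiftedExp l c)) :=
    Measure.isProbabilityMeasure_map (measurable_osF hK hKN).aemeasurable
  refine Measure.ext_of_Iic _ _ (fun x => ?_)
  rw [Measure.map_apply (measurable_osF hK hKN) measurableSet_Iic]
  have hpre : osF K ⁻¹' Iic x = {v : Fin N → ℝ | K ≤ cnt v x} := by
    ext v; simp [osF_le_iff hK hKN]
  rw [hpre, pi_cnt_ge_measure]
  by_cases hx : c ≤ x
  · rw [shiftedExp_Iic_of_le hl hx, shiftedExp_Ioi_of_le hl hx, nu_Iic_of_le hl hK hKN hx]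
    have hF : Ff l c x = 1 - Real.exp (-l * (x - c)) := rfl
    have hq : qe l c x = Real.exp (-l * (x - c)) := rfl
    unfold Hc
    rw [ENNReal.ofReal_sum_of_nonneg (fun m hm => by
      have h1 := Ff_nonneg hl hx (l := l)
      have h2 := (qe_pos (l := l) (c := c) x).le
      positivity)]
    apply Finset.sum_congr rfl
    intro m hm
    have h1 := Ff_nonneg hl hx (l := l)
    have h2 := (qe_pos (l := l) (c := c) x).le
    rw [← hF, ← hq, ENNReal.ofReal_mul (by positivity), ENNReal.ofReal_mul (by positivity),
      ENNReal.ofReal_pow h1, ENNReal.ofReal_pow h2, ENNReal.ofReal_natCast]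
    ring
  · push_neg at hx
    rw [shiftedExp_Iic_of_lt hl hx, nu_Iic_of_lt hl hx]
    apply Finset.sum_eq_zero
    intro m hm
    rw [Finset.mem_Icc] at hm
    rw [zero_pow (by omega), mul_zero, zero_mul]
end nu
section integrals
variable {N K : ℕ} {l c : ℝ}

noncomputable def UU (N K : ℕ) (j : ℕ) : ℝ := (N : ℝ) - K + 1 + j

lemma UU_pos (hKN : K ≤ N) (j : ℕ) : 0 < UU N K j := by
  rw [UU]
  have : (K : ℝ) ≤ N := Nat.cast_le.mpr hKN
  have : (0:ℝ) ≤ j := Nat.cast_nonneg j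
  linarith

lemma UU_cast (hKN : K ≤ N) (j : ℕ) : ((N - K + 1 + j : ℕ) : ℝ) = UU N K j := by
  rw [UU]
  push_cast [Nat.cast_sub hKN]
  ring

lemma gCont_expand (hK : 1 ≤ K) (hKN : K ≤ N) (t : ℝ) :
    gCont N K l c t = ∑ j ∈ Finset.range K,
      ((K : ℝ) * (N.choose K : ℝ) * ((K-1).choose j : ℝ) * (-1)^j)
        * (l * Real.exp (-(l * UU N K j) * (t - c))) := by
  have hbinom : (Ff l c t)^(K-1) = ∑ j ∈ Finset.range K,
      ((K-1).choose j : ℝ) * (-1)^j * (qe l c t)^j := by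
    have h1 : Ff l c t = -qe l c t + 1 := by rw [Ff]; ring
    rw [h1, add_pow]
    rw [show K - 1 + 1 = K by omega]
    apply Finset.sum_congr rfl
    intro j hj
    rw [one_pow, neg_pow]
    ring
  have hqpow : ∀ j, (qe l c t)^(N - K + 1 + j) = Real.exp (-(l * UU N K j) * (t - c)) := by
    intro j
    rw [qe, ← Real.exp_nat_mul]
    congr 1
    rw [UU_cast hKN j, UU]
    ring
  rw [gCont, hbinom, Finset.mul_sum, Finset.sum_mul, Finset.sum_mul]
  apply Finset.sum_congr rfl
  intro j hj
  rw [← hqpow j]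
  rw [show N - K + 1 + j = j + (N - K) + 1 by omega]
  rw [pow_add, pow_add, pow_one]
  ring

lemma integrableOn_term_Ioi (hl : 0 < l) (hKN : K ≤ N) (j : ℕ) (b : ℝ) (r : ℝ) :
    IntegrableOn (fun t => r * (l * Real.exp (-(l * UU N K j) * (t - c)))) (Ioi b) := by
  have ha : 0 < l * UU N K j := mul_pos hl (UU_pos hKN j)
  exact ((integrableOn_expShift ha c b).const_mul l).const_mul r

lemma integral_gd_Ici (hl : 0 < l) (hK : 1 ≤ K) (hKN : K ≤ N) {b : ℝ} (hb : c < b) :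
    ∫ t in Ici b, gd N K l c t
      = ∑ j ∈ Finset.range K,
        ((K : ℝ) * (N.choose K : ℝ) * ((K-1).choose j : ℝ) * (-1)^j)
          * Real.exp (-(l * UU N K j) * (b - c)) / UU N K j := by
  rw [MeasureTheory.integral_Ici_eq_integral_Ioi]
  have h1 : ∀ t ∈ Ioi b, gd N K l c t = gCont N K l c t := by
    intro t ht
    rw [gd, if_pos (lt_trans hb ht)]
  rw [setIntegral_congr_fun measurableSet_Ioi h1]
  have h2 : ∀ t ∈ Ioi b, gCont N K l c t = ∑ j ∈ Finset.range K,
      ((K : ℝ) * (N.choose K : ℝ) * ((K-1).choose j : ℝ) * (-1)^j)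
        * (l * Real.exp (-(l * UU N K j) * (t - c))) := fun t _ => gCont_expand hK hKN t
  rw [setIntegral_congr_fun measurableSet_Ioi h2]
  rw [MeasureTheory.integral_finset_sum _
    (fun j _ => integrableOn_term_Ioi hl hKN j b _)]
  apply Finset.sum_congr rfl
  intro j hj
  have ha : 0 < l * UU N K j := mul_pos hl (UU_pos hKN j)
  rw [MeasureTheory.integral_const_mul]
  have h3 : ∫ t in Ioi b, l * Real.exp (-(l * UU N K j) * (t - c))
      = Real.exp (-(l * UU N K j) * (b - c)) / UU N K j := by
    have h4 := integral_expShift_Ioi ha c b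
    have hU0 : UU N K j ≠ 0 := (UU_pos hKN j).ne'
    have h5 : (fun t => l * Real.exp (-(l * UU N K j) * (t - c)))
        = fun t => (UU N K j)⁻¹ * ((l * UU N K j) * Real.exp (-(l * UU N K j) * (t - c))) := by
      funext t
      field_simp
    rw [h5, MeasureTheory.integral_const_mul, h4]
    rw [div_eq_inv_mul]
  rw [h3, mul_div_assoc]

lemma hasDerivAt_phi (a c : ℝ) (ha : a ≠ 0) (t : ℝ) :
    HasDerivAt (fun u => -((u/a) + 1/a^2) * Real.exp (-a * (u - c)))
      (t * Real.exp (-a * (t - c))) t := by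
  have h1 : HasDerivAt (fun u : ℝ => -((u/a) + 1/a^2)) (-(1/a)) t := by
    have h := (((hasDerivAt_id t).div_const a).add_const (1/a^2)).fun_neg
    convert! h using 1
  have h2 : HasDerivAt (fun u : ℝ => Real.exp (-a * (u - c)))
      (Real.exp (-a * (t - c)) * -a) t := by
    have h3 : HasDerivAt (fun u : ℝ => -a * (u - c)) (-a) t := by
      simpa using ((hasDerivAt_id t).sub_const c).const_mul (-a)
    exact h3.exp
  have := h1.fun_mul h2
  convert! this using 1
  field_simp
  ring

lemma integral_t_exp (a c b : ℝ) (ha : a ≠ 0) :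
    ∫ t in c..b, t * Real.exp (-a * (t - c))
      = (c/a + 1/a^2) - (b/a + 1/a^2) * Real.exp (-a * (b - c)) := by
  rw [intervalIntegral.integral_eq_sub_of_hasDerivAt
    (fun t _ => hasDerivAt_phi a c ha t)
    (((continuous_id.mul (cont_expShift a c))).intervalIntegrable _ _)]
  simp only [sub_self, neg_mul, neg_zero, mul_zero, Real.exp_zero]
  ring

lemma integral_gd_mul_id_Iio (hl : 0 < l) (hK : 1 ≤ K) (hKN : K ≤ N) {b : ℝ} (hb : c < b) :
    ∫ t in Iio b, gd N K l c t * t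
      = ∑ j ∈ Finset.range K,
        ((K : ℝ) * (N.choose K : ℝ) * ((K-1).choose j : ℝ) * (-1)^j) / (l * (UU N K j)^2)
          * (1 + c * l * UU N K j
            - (1 + b * l * UU N K j) * Real.exp (-(l * UU N K j) * (b - c))) := by
  have hind : ∀ t, gd N K l c t * t = (Ioi c).indicator (fun u => gCont N K l c u * u) t := by
    intro t
    rw [gd_eq_indicator]
    by_cases ht : t ∈ Ioi c
    · simp [indicator_apply, ht]
    · simp [indicator_apply, ht]
  rw [MeasureTheory.setIntegral_congr_fun measurableSet_Iio (fun t _ => hind t)]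
  rw [setIntegral_indicator measurableSet_Ioi]
  have h1 : Iio b ∩ Ioi c = Ioo c b := by ext t; simp [mem_Ioo, and_comm]
  rw [h1, ← MeasureTheory.integral_Ioc_eq_integral_Ioo, ← intervalIntegral.integral_of_le hb.le]
  have h2 : ∀ t, gCont N K l c t * t = ∑ j ∈ Finset.range K,
      ((K : ℝ) * (N.choose K : ℝ) * ((K-1).choose j : ℝ) * (-1)^j) * l
        * (t * Real.exp (-(l * UU N K j) * (t - c))) := by
    intro t
    rw [gCont_expand hK hKN, Finset.sum_mul]
    apply Finset.sum_congr rfl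
    intro j _
    ring
  rw [intervalIntegral.integral_congr (fun t _ => h2 t)]
  rw [intervalIntegral.integral_finset_sum (fun j _ => by
    apply Continuous.intervalIntegrable
    exact (continuous_const.mul (continuous_id.mul (cont_expShift _ c))))]
  apply Finset.sum_congr rfl
  intro j _
  have hU := UU_pos hKN j
  have ha : l * UU N K j ≠ 0 := (mul_pos hl hU).ne'
  rw [intervalIntegral.integral_const_mul, integral_t_exp _ _ _ ha]
  field_simp
  ring
end integrals
section final
variable {N K : ℕ} {l c : ℝ}

lemma integrableOn_gCont_Ioi (hl : 0 < l) (hK : 1 ≤ K) (hKN : K ≤ N) (b : ℝ) :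
    IntegrableOn (gCont N K l c) (Ioi b) := by
  have hfun : gCont N K l c = fun t => ∑ j ∈ Finset.range K,
      ((K : ℝ) * (N.choose K : ℝ) * ((K-1).choose j : ℝ) * (-1)^j)
        * (l * Real.exp (-(l * UU N K j) * (t - c))) := funext (gCont_expand hK hKN)
  rw [hfun]
  exact integrable_finset_sum _ (fun j _ => integrableOn_term_Ioi hl hKN j b _)

lemma integrableOn_gd_Ici (hl : 0 < l) (hK : 1 ≤ K) (hKN : K ≤ N) {b : ℝ} (hb : c < b) :
    IntegrableOn (gd N K l c) (Ici b) := by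
  rw [integrableOn_Ici_iff_integrableOn_Ioi]
  refine (integrableOn_gCont_Ioi hl hK hKN b (c := c)).congr_fun
    (g := gd N K l c) (fun t ht => ?_) measurableSet_Ioi
  rw [gd, if_pos (lt_trans hb ht)]

lemma nu_Ici (hl : 0 < l) (hK : 1 ≤ K) (hKN : K ≤ N) {b : ℝ} (hb : c < b) :
    (volume.withDensity fun t => ENNReal.ofReal (gd N K l c t)) (Ici b)
      = ENNReal.ofReal (∫ t in Ici b, gd N K l c t) := by
  rw [withDensity_apply _ measurableSet_Ici,
    ← ofReal_integral_eq_lintegral_ofReal (integrableOn_gd_Ici hl hK hKN hb)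
      (Filter.Eventually.of_forall fun t => gd_nonneg hl t)]

theorem cond_first_moment_orderStat_fixed_deadline
    {Ω : Type*} [MeasurableSpace Ω] (P : MeasureTheory.Measure Ω) [IsProbabilityMeasure P]
    (N K : ℕ) (hK : 1 ≤ K) (hKN : K ≤ N)
    (l c TD : ℝ) (hl : 0 < l) (hc : 0 ≤ c) (hTD : c < TD)
    (T : Fin N → Ω → ℝ) (hT : ∀ i, Measurable (T i))
    (hlaw : MeasureTheory.Measure.map (fun ω i => T i ω) P
      = MeasureTheory.Measure.pi (fun _ : Fin N => shiftedExp l c))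
    (B : ℕ → ℝ) (hB : ∀ j, B j = (K : ℝ) * (N.choose K : ℝ) * ((K - 1).choose j : ℝ) * (-1) ^ j)
    (U : ℕ → ℝ) (hU : ∀ j, U j = (N : ℝ) - K + 1 + j)
    (Z : ℝ) (hZ : Z = ∑ i ∈ Finset.range K, B i * Real.exp (-l * U i * (TD - c)) / U i) :
    (∫ ω, orderStat T K ω ∂(P[|{ω | orderStat T K ω < TD}]))
      = (1 / (1 - Z)) * ∑ j ∈ Finset.range K,
          (B j / (l * (U j) ^ 2))
            * (1 + c * l * U j - (1 + TD * l * U j) * Real.exp (-l * U j * (TD - c))) := by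
  classical
  have hvec : Measurable (fun ω i => T i ω) := measurable_pi_lambda _ hT
  haveI hprob0 : IsProbabilityMeasure (shiftedExp l c) := shiftedExp_prob hl
  have hlaw2 : Measure.map (osF K) (Measure.pi (fun _ : Fin N => shiftedExp l c))
      = volume.withDensity (fun t => ENNReal.ofReal (gd N K l c t)) := law_osF hl hK hKN
  set ν : Measure ℝ := volume.withDensity (fun t => ENNReal.ofReal (gd N K l c t)) with hν
  haveI : IsProbabilityMeasure ν := by
    rw [← hlaw2]
    exact Measure.isProbabilityMeasure_map (measurable_osF hK hKN).aemeasurable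
  have hBs : MeasurableSet {v : Fin N → ℝ | osF K v < TD} :=
    measurableSet_lt (measurable_osF hK hKN) measurable_const
  have hA : {ω | orderStat T K ω < TD}
      = (fun ω i => T i ω) ⁻¹' {v : Fin N → ℝ | osF K v < TD} := rfl
  have hpre2 : {v : Fin N → ℝ | osF K v < TD} = osF K ⁻¹' (Iio TD) := rfl
  have hPA : P {ω | orderStat T K ω < TD} = ν (Iio TD) := by
    rw [hA, ← Measure.map_apply hvec hBs, hlaw, hpre2,
      ← Measure.map_apply (measurable_osF hK hKN) measurableSet_Iio, hlaw2]
  have hZval : Z = ∫ t in Ici TD, gd N K l c t := by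
    rw [integral_gd_Ici hl hK hKN hTD, hZ]
    apply Finset.sum_congr rfl
    intro j hj
    rw [hB, hU]
    simp only [UU]
    ring_nf
  have hZ0 : 0 ≤ Z := by
    rw [hZval]
    exact setIntegral_nonneg measurableSet_Ici (fun t _ => gd_nonneg hl t)
  have hIci : ν (Ici TD) = ENNReal.ofReal Z := by
    rw [hν, nu_Ici hl hK hKN hTD, hZval]
  have hle1 : ENNReal.ofReal Z ≤ 1 := by
    rw [← hIci]
    exact (measure_mono (subset_univ _)).trans_eq measure_univ
  have hIio : ν (Iio TD) = 1 - ENNReal.ofReal Z := by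
    have hdiff := measure_diff (μ := ν) (subset_univ (Ici TD))
      measurableSet_Ici.nullMeasurableSet (measure_ne_top ν _)
    rw [← Set.compl_eq_univ_diff, Set.compl_Ici] at hdiff
    rw [hdiff, measure_univ, hIci]
  have hint1 : ∫ ω in {ω | orderStat T K ω < TD}, orderStat T K ω ∂P
      = ∫ t in Iio TD, gd N K l c t * t := by
    have e1 : ∫ ω in {ω | orderStat T K ω < TD}, orderStat T K ω ∂P
        = ∫ v in {v : Fin N → ℝ | osF K v < TD}, osF K v
            ∂(Measure.pi (fun _ : Fin N => shiftedExp l c)) := by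
      rw [← hlaw, setIntegral_map hBs (measurable_osF hK hKN).aestronglyMeasurable
        hvec.aemeasurable]
      rfl
    have e2 : ∫ v in {v : Fin N → ℝ | osF K v < TD}, osF K v
        ∂(Measure.pi (fun _ : Fin N => shiftedExp l c)) = ∫ x in Iio TD, x ∂ν := by
      rw [← hlaw2, setIntegral_map (f := fun x : ℝ => (x : ℝ)) measurableSet_Iio aestronglyMeasurable_id
        (measurable_osF hK hKN).aemeasurable]
      rfl
    have e3 : ∫ x in Iio TD, x ∂ν = ∫ t in Iio TD, gd N K l c t * t := by
      have hmeas : Measurable (fun t => (gd N K l c t).toNNReal) :=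
        (measurable_gd).real_toNNReal
      have hcast : ν = volume.withDensity (fun t => ((gd N K l c t).toNNReal : ℝ≥0∞)) := rfl
      rw [hcast, setIntegral_withDensity_eq_setIntegral_smul hmeas _ measurableSet_Iio]
      apply setIntegral_congr_fun measurableSet_Iio
      intro t _
      show ((gd N K l c t).toNNReal : ℝ≥0) • t = gd N K l c t * t
      rw [NNReal.smul_def, Real.coe_toNNReal _ ?_]
      · rfl
      · exact gd_nonneg hl t
    rw [e1, e2, e3]
  rw [ProbabilityTheory.cond, integral_smul_measure, ENNReal.toReal_inv]
  have hres : ∫ ω, orderStat T K ω ∂(P.restrict {ω | orderStat T K ω < TD})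
      = ∫ ω in {ω | orderStat T K ω < TD}, orderStat T K ω ∂P := rfl
  rw [hres, hint1, integral_gd_mul_id_Iio hl hK hKN hTD, hPA, hIio,
    ENNReal.toReal_sub_of_le hle1 (by simp), ENNReal.toReal_one, ENNReal.toReal_ofReal hZ0,
    one_div, smul_eq_mul]
  congr 1
  apply Finset.sum_congr rfl
  intro j hj
  rw [hB, hU]
  simp only [UU]
  ring_nf
end final
end

section
/- Let T_N(K) be the K-th order statistic of N i.i.d. shifted exponential variables with rate λ_s > 0 and shift c ≥ 0, and let T_D > c. Then E[T_N(K)² | T_N(K) < T_D] = (1/(1-Z_K)) · Σ_{j=0}^{K-1} (B_{K,j}/(λ_s² U_{K,j}³)) · [(1 + cλ_s U_{K,j})² + 1 - ((1 + T_D λ_s U_{K,j})² + 1)·e^{-λ_s U_{K,j}(T_D-c)}], where B_{K,j} = K·binom(N,K)·binom(K-1,j)·(-1)^j, U_{K,j} = N-K+1+j, and Z_K = Σ_{i=0}^{K-1} B_{K,i}·e^{-λ_s U_{K,i}(T_D-c)}/U_{K,i}. -/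
open MeasureTheory ProbabilityTheory Real

section Poly

open Finset

lemma derivL (N K : ℕ) (hK : 1 ≤ K) (hKN : K ≤ N) (q : ℝ) :
    HasDerivAt (fun q : ℝ => ∑ m ∈ Finset.Icc K N, (N.choose m : ℝ) * (1-q)^m * q^(N-m))
      (-((N:ℝ) * ((N-1).choose (K-1)) * (1-q)^(K-1) * q^(N-K))) q := by
  have hterm : ∀ m ∈ Finset.Icc K N, HasDerivAt
      (fun q : ℝ => (N.choose m : ℝ) * (1-q)^m * q^(N-m))
      ((N:ℝ) * ((N-1).choose m) * (1-q)^m * q^(N-1-m)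
        - (N:ℝ) * ((N-1).choose (m-1)) * (1-q)^(m-1) * q^(N-m)) q := by
    intro m hm
    simp only [Finset.mem_Icc] at hm
    obtain ⟨h1, h2⟩ := hm
    have hm1 : 1 ≤ m := le_trans hK h1
    have hbase : HasDerivAt (fun q : ℝ => (1-q)^m * q^(N-m))
        ((↑m * (1-q)^(m-1) * (-1)) * q^(N-m) + (1-q)^m * (↑(N-m) * q^(N-m-1))) q := by
      have h1q : HasDerivAt (fun q : ℝ => 1 - q) (-1) q := (hasDerivAt_id q).const_sub 1
      have hp : HasDerivAt (fun q : ℝ => (1-q)^m) (↑m * (1-q)^(m-1) * (-1)) q :=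
        (hasDerivAt_pow m (1-q)).comp q h1q
      exact hp.mul (hasDerivAt_pow (N-m) q)
    have hb2 := hbase.const_mul ((N.choose m : ℝ))
    simp only [← mul_assoc] at hb2
    refine hb2.congr_deriv (Eq.symm ?_)
    have e1 : ((N.choose m : ℝ) * m) = (N:ℝ) * ((N-1).choose (m-1)) := by
      have h := Nat.add_one_mul_choose_eq (N-1) (m-1)
      have hN' : N - 1 + 1 = N := by omega
      have hm' : m - 1 + 1 = m := by omega
      rw [hN', hm'] at h
      have : N * ((N-1).choose (m-1)) = N.choose m * m := h
      exact_mod_cast (congrArg (Nat.cast (R := ℝ)) this).symm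
    have e2 : ((N.choose m : ℝ) * ((N - m : ℕ) : ℝ)) = (N:ℝ) * ((N-1).choose m) := by
      have h := Nat.choose_mul_succ_eq (N-1) m
      have hN' : N - 1 + 1 = N := by omega
      rw [hN'] at h
      have : N.choose m * (N - m) = N * ((N-1).choose m) := by rw [← h, Nat.mul_comm]
      exact_mod_cast congrArg (Nat.cast (R := ℝ)) this
    have e3 : N - 1 - m = N - m - 1 := by omega
    rw [e3, ← e1, ← e2]
    ring
  have hsum := HasDerivAt.fun_sum hterm
  refine hsum.congr_deriv (Eq.symm ?_)
  have tel := Finset.sum_range_sub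
    (fun i : ℕ => (N:ℝ) * ((N-1).choose (K-1+i)) * (1-q)^(K-1+i) * q^(N-1-(K-1+i))) (N+1-K)
  have hre : ∑ m ∈ Finset.Icc K N, ((N:ℝ) * ((N-1).choose m) * (1-q)^m * q^(N-1-m)
        - (N:ℝ) * ((N-1).choose (m-1)) * (1-q)^(m-1) * q^(N-m))
      = ∑ i ∈ Finset.range (N+1-K),
        ((fun i : ℕ => (N:ℝ) * ((N-1).choose (K-1+i)) * (1-q)^(K-1+i) * q^(N-1-(K-1+i))) (i+1)
          - (fun i : ℕ => (N:ℝ) * ((N-1).choose (K-1+i)) * (1-q)^(K-1+i) * q^(N-1-(K-1+i))) i) := by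
    rw [show Finset.Icc K N = Finset.Ico K (N+1) by rfl, Finset.sum_Ico_eq_sum_range]
    apply Finset.sum_congr rfl
    intro i _
    have a1 : K - 1 + (i+1) = K + i := by omega
    have a2 : K - 1 + i = K + i - 1 := by omega
    have a3 : N - 1 - (K + i - 1) = N - (K + i) := by omega
    simp only [a1, a2, a3]
  rw [hre, tel]
  have hz : ((N-1).choose (K-1+(N+1-K)) : ℝ) = 0 := by
    have h : K - 1 + (N+1-K) = N := by omega
    rw [h]
    exact_mod_cast congrArg (Nat.cast (R := ℝ)) (Nat.choose_eq_zero_of_lt (by omega))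
  simp only [hz, add_zero]
  have a4 : N - 1 - (K-1) = N - K := by omega
  simp only [a4]
  ring

lemma binom_neg (K : ℕ) (hK : 1 ≤ K) (q : ℝ) :
    ∑ j ∈ Finset.range K, ((K-1).choose j : ℝ) * (-1)^j * q^j = (1-q)^(K-1) := by
  have h := add_pow (-q) 1 (K-1)
  rw [show K - 1 + 1 = K by omega] at h
  have : (1 - q) = (-q + 1) := by ring
  rw [this, h]
  apply Finset.sum_congr rfl
  intro j _
  rw [neg_pow]
  ring

lemma derivR (N K : ℕ) (hK : 1 ≤ K) (hKN : K ≤ N) (q : ℝ) :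
    HasDerivAt (fun q : ℝ => ∑ j ∈ Finset.range K,
        ((K:ℝ) * (N.choose K : ℝ) * (((K-1).choose j : ℕ) : ℝ) * (-1)^j) / ((N:ℝ)-K+1+j)
          * (1 - q^(N-K+1+j)))
      (-((N:ℝ) * ((N-1).choose (K-1)) * (1-q)^(K-1) * q^(N-K))) q := by
  have hu : ∀ j : ℕ, ((N - K + 1 + j : ℕ) : ℝ) = (N:ℝ) - K + 1 + j := by
    intro j; push_cast [Nat.cast_sub hKN]; ring
  have hupos : ∀ j : ℕ, (0:ℝ) < (N:ℝ) - K + 1 + j := by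
    intro j
    nlinarith [ (by exact_mod_cast hKN : (K:ℝ) ≤ (N:ℝ)), Nat.cast_nonneg (α := ℝ) j]
  have hterm : ∀ j ∈ Finset.range K, HasDerivAt
      (fun q : ℝ => ((K:ℝ) * (N.choose K : ℝ) * (((K-1).choose j : ℕ) : ℝ) * (-1)^j)
          / ((N:ℝ)-K+1+j) * (1 - q^(N-K+1+j)))
      (-(((K:ℝ) * (N.choose K : ℝ) * (((K-1).choose j : ℕ) : ℝ) * (-1)^j) * q^(N-K+j))) q := by
    intro j _
    have hp : HasDerivAt (fun q : ℝ => 1 - q^(N-K+1+j))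
        (-(((N-K+1+j : ℕ):ℝ) * q^(N-K+1+j-1))) q := by
      simpa using (hasDerivAt_pow (N-K+1+j) q).const_sub 1
    have := hp.const_mul (((K:ℝ) * (N.choose K : ℝ) * (((K-1).choose j : ℕ) : ℝ) * (-1)^j)
          / ((N:ℝ)-K+1+j))
    refine this.congr_deriv (Eq.symm ?_)
    rw [show N-K+1+j-1 = N-K+j by omega, hu j]
    have hne : ((N:ℝ) - K + 1 + j) ≠ 0 := (hupos j).ne'
    field_simp
  have hsum := HasDerivAt.fun_sum hterm
  refine hsum.congr_deriv (Eq.symm ?_)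
  have hA : (K:ℝ) * (N.choose K : ℝ) = (N:ℝ) * (((N-1).choose (K-1) : ℕ) : ℝ) := by
    have h := Nat.add_one_mul_choose_eq (N-1) (K-1)
    rw [show N-1+1 = N by omega,
      show K-1+1 = K by omega] at h
    exact_mod_cast congrArg (Nat.cast (R := ℝ)) ((Nat.mul_comm K (N.choose K)).trans h.symm)
  calc -((N:ℝ) * ((N-1).choose (K-1)) * (1-q)^(K-1) * q^(N-K))
      = (-(((K:ℝ) * (N.choose K : ℝ)) * q^(N-K))) * (1-q)^(K-1) := by rw [hA]; ring
    _ = (-(((K:ℝ) * (N.choose K : ℝ)) * q^(N-K))) *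
          ∑ j ∈ Finset.range K, (((K-1).choose j : ℕ) : ℝ) * (-1)^j * q^j := by
        rw [binom_neg K hK q]
    _ = ∑ j ∈ Finset.range K,
        (-(((K:ℝ) * (N.choose K : ℝ) * (((K-1).choose j : ℕ) : ℝ) * (-1)^j) * q^(N-K+j))) := by
        rw [Finset.mul_sum]
        apply Finset.sum_congr rfl
        intro j _
        rw [pow_add]
        ring

lemma poly_id (N K : ℕ) (hK : 1 ≤ K) (hKN : K ≤ N) (q : ℝ) :
    ∑ m ∈ Finset.Icc K N, (N.choose m : ℝ) * (1-q)^m * q^(N-m)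
      = ∑ j ∈ Finset.range K,
        ((K:ℝ) * (N.choose K : ℝ) * (((K-1).choose j : ℕ) : ℝ) * (-1)^j) / ((N:ℝ)-K+1+j)
          * (1 - q^(N-K+1+j)) := by
  set L : ℝ → ℝ := fun q => ∑ m ∈ Finset.Icc K N, (N.choose m : ℝ) * (1-q)^m * q^(N-m) with hL
  set R : ℝ → ℝ := fun q => ∑ j ∈ Finset.range K,
        ((K:ℝ) * (N.choose K : ℝ) * (((K-1).choose j : ℕ) : ℝ) * (-1)^j) / ((N:ℝ)-K+1+j)
          * (1 - q^(N-K+1+j)) with hR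
  have hd : ∀ x : ℝ, HasDerivAt (fun t => L t - R t) 0 x := by
    intro x
    have := (derivL N K hK hKN x).sub (derivR N K hK hKN x)
    exact this.congr_deriv (sub_self _)
  have hconst : L q - R q = L 1 - R 1 :=
    is_const_of_deriv_eq_zero (fun x => (hd x).differentiableAt)
      (fun x => (hd x).deriv) q 1
  have hL1 : L 1 = 0 := by
    rw [hL]
    apply Finset.sum_eq_zero
    intro m hm
    simp only [Finset.mem_Icc] at hm
    rw [sub_self, zero_pow (by omega : m ≠ 0)]
    ring
  have hR1 : R 1 = 0 := by
    rw [hR]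
    apply Finset.sum_eq_zero
    intro j _
    rw [one_pow, sub_self, mul_zero]
  rw [hL1, hR1] at hconst
  linarith [hconst]

lemma sum_BU_eq_one (N K : ℕ) (hK : 1 ≤ K) (hKN : K ≤ N) :
    ∑ j ∈ Finset.range K,
        ((K:ℝ) * (N.choose K : ℝ) * (((K-1).choose j : ℕ) : ℝ) * (-1)^j) / ((N:ℝ)-K+1+j)
      = 1 := by
  have h := poly_id N K hK hKN 0
  have hLHS : ∑ m ∈ Finset.Icc K N, (N.choose m : ℝ) * (1-(0:ℝ))^m * (0:ℝ)^(N-m) = 1 := by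
    rw [Finset.sum_eq_single N]
    · simp
    · intro m hm hmN
      simp only [Finset.mem_Icc] at hm
      rw [zero_pow (by omega : N - m ≠ 0)]
      ring
    · intro h'
      simp only [Finset.mem_Icc] at h'
      omega
  rw [hLHS] at h
  have h2 : ∑ j ∈ Finset.range K,
      ((K:ℝ) * (N.choose K : ℝ) * (((K-1).choose j : ℕ) : ℝ) * (-1)^j) / ((N:ℝ)-K+1+j)
      = ∑ j ∈ Finset.range K,
      ((K:ℝ) * (N.choose K : ℝ) * (((K-1).choose j : ℕ) : ℝ) * (-1)^j) / ((N:ℝ)-K+1+j)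
        * (1 - (0:ℝ)^(N-K+1+j)) := by
    apply Finset.sum_congr rfl
    intro j _
    rw [zero_pow (by omega : N-K+1+j ≠ 0)]
    ring
  rw [h2]
  exact h.symm

end Poly

section OrderStatLemmas

lemma orderStat_le_iff {N K : ℕ} (hK : 1 ≤ K) (hKN : K ≤ N) (v : Fin N → ℝ) (t : ℝ) :
    sInf {x : ℝ | K ≤ Nat.card {i : Fin N // v i ≤ x}} ≤ t
      ↔ K ≤ Nat.card {i : Fin N // v i ≤ t} := by
  classical
  have hNpos : 0 < N := by omega
  haveI : Nonempty (Fin N) := ⟨⟨0, hNpos⟩⟩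
  have hcount : ∀ x : ℝ, Nat.card {i : Fin N // v i ≤ x}
      = (Finset.univ.filter (fun i => v i ≤ x)).card := by
    intro x; rw [Nat.card_eq_fintype_card, Fintype.card_subtype]
  set S := {x : ℝ | K ≤ Nat.card {i : Fin N // v i ≤ x}} with hS
  have hmemIff : ∀ x : ℝ, x ∈ S ↔ K ≤ (Finset.univ.filter (fun i => v i ≤ x)).card := by
    intro x
    rw [hS]
    simp only [Set.mem_setOf_eq, hcount]
  have hup : ∀ x ∈ S, ∀ y, x ≤ y → y ∈ S := by
    intro x hx y hxy
    rw [hmemIff] at hx ⊢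
    exact le_trans hx (Finset.card_le_card
      (Finset.monotone_filter_right _ (fun i _ hi => le_trans hi hxy)))
  have hne : S.Nonempty := by
    refine ⟨Finset.univ.sup' Finset.univ_nonempty v, ?_⟩
    rw [hmemIff]
    have hall : ∀ i ∈ Finset.univ, v i ≤ Finset.univ.sup' Finset.univ_nonempty v :=
      fun i hi => Finset.le_sup' v hi
    rw [Finset.filter_true_of_mem hall, Finset.card_univ, Fintype.card_fin]
    exact hKN
  have hbdd : BddBelow S := by
    refine ⟨Finset.univ.inf' Finset.univ_nonempty v, ?_⟩
    intro x hx
    rw [hmemIff] at hx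
    have hfne : (Finset.univ.filter (fun i => v i ≤ x)).Nonempty :=
      Finset.card_pos.mp (by omega)
    obtain ⟨i, hi⟩ := hfne
    simp only [Finset.mem_filter] at hi
    exact le_trans (Finset.inf'_le v (Finset.mem_univ i)) hi.2
  have hmem : sInf S ∈ S := by
    by_contra hns
    rw [hmemIff] at hns
    have hcard : (Finset.univ.filter (fun i => v i ≤ sInf S)).card < K := by omega
    have hAne : (Finset.univ.filter (fun i => sInf S < v i)).Nonempty := by
      apply Finset.card_pos.mp
      have hsplit := Finset.card_filter_add_card_filter_not
        (s := Finset.univ) (p := fun i : Fin N => v i ≤ sInf S)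
      have hcongr : (Finset.univ.filter (fun i : Fin N => ¬ v i ≤ sInf S))
          = Finset.univ.filter (fun i : Fin N => sInf S < v i) := by
        apply Finset.filter_congr
        intro i _
        simp [not_le]
      rw [hcongr] at hsplit
      rw [Finset.card_univ, Fintype.card_fin] at hsplit
      omega
    set y := (Finset.univ.filter (fun i => sInf S < v i)).inf' hAne v with hy
    have hylt : sInf S < y := by
      rw [hy, Finset.lt_inf'_iff]
      intro i hi
      exact (Finset.mem_filter.mp hi).2
    have hyle : y ≤ sInf S := by
      apply le_csInf hne
      intro z hz
      by_contra hzy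
      push_neg at hzy
      have hzS : sInf S ≤ z := csInf_le hbdd hz
      rw [hmemIff] at hz
      have hsub : Finset.univ.filter (fun i => v i ≤ z)
          ⊆ Finset.univ.filter (fun i => v i ≤ sInf S) := by
        intro i hi
        simp only [Finset.mem_filter, Finset.mem_univ, true_and] at hi ⊢
        by_contra hvi
        push_neg at hvi
        have : y ≤ v i := Finset.inf'_le v (Finset.mem_filter.mpr ⟨Finset.mem_univ i, hvi⟩)
        linarith
      have := Finset.card_le_card hsub
      omega
    linarith
  constructor
  · intro h
    exact hup _ hmem _ h
  · intro h
    exact csInf_le hbdd h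

lemma measurableSet_count {Ω : Type*} [MeasurableSpace Ω] {N : ℕ} (K : ℕ)
    (T : Fin N → Ω → ℝ) (hT : ∀ i, Measurable (T i)) (t : ℝ) :
    MeasurableSet {ω : Ω | K ≤ Nat.card {i : Fin N // T i ω ≤ t}} := by
  classical
  have hconv : ∀ ω, Nat.card {i : Fin N // T i ω ≤ t}
      = ∑ i : Fin N, if T i ω ≤ t then 1 else 0 := by
    intro ω
    rw [Nat.card_eq_fintype_card, Fintype.card_subtype, Finset.card_filter]
  simp only [hconv]
  have hm : Measurable fun ω => ∑ i : Fin N, if T i ω ≤ t then (1:ℕ) else 0 :=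
    Finset.measurable_sum _ (fun i _ =>
      Measurable.ite (measurableSet_le (hT i) measurable_const)
        measurable_const measurable_const)
  exact measurableSet_le measurable_const hm

lemma measurable_orderStat {Ω : Type*} [MeasurableSpace Ω] {N K : ℕ} (hK : 1 ≤ K) (hKN : K ≤ N)
    (T : Fin N → Ω → ℝ) (hT : ∀ i, Measurable (T i)) :
    Measurable (orderStat T K) := by
  apply measurable_of_Iic
  intro t
  have hpre : orderStat T K ⁻¹' (Set.Iic t) = {ω : Ω | K ≤ Nat.card {i : Fin N // T i ω ≤ t}} := by
    ext ω
    simp only [Set.mem_preimage, Set.mem_Iic, Set.mem_setOf_eq]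
    exact orderStat_le_iff hK hKN (fun i => T i ω) t
  rw [hpre]
  exact measurableSet_count K T hT t

end OrderStatLemmas


section MeasureLemmas

open Set

lemma hasDerivAt_expshift (a c : ℝ) (s : ℝ) :
    HasDerivAt (fun u : ℝ => -Real.exp (-a*(u-c))) (a * Real.exp (-a*(s-c))) s := by
  have h1 : HasDerivAt (fun u : ℝ => -a*(u-c)) (-a) s := by
    simpa using ((hasDerivAt_id s).sub_const c).const_mul (-a)
  have h2 := h1.exp
  refine h2.neg.congr_deriv (Eq.symm ?_)
  ring

lemma continuous_expshift (a c b : ℝ) : Continuous (fun s : ℝ => b * Real.exp (-a*(s-c))) :=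
  continuous_const.mul ((Real.continuous_exp).comp
    (continuous_const.mul (continuous_id.sub continuous_const)))

lemma integral_exp_Ioc (a c : ℝ) {x y : ℝ} (hxy : x ≤ y) :
    ∫ s in Set.Ioc x y, a * Real.exp (-a*(s-c))
      = Real.exp (-a*(x-c)) - Real.exp (-a*(y-c)) := by
  rw [← intervalIntegral.integral_of_le hxy]
  rw [intervalIntegral.integral_eq_sub_of_hasDerivAt (fun u _ => hasDerivAt_expshift a c u)
    ((continuous_expshift a c a).intervalIntegrable x y)]
  ring

lemma shiftedExp_Iic (l c t : ℝ) (hl : 0 < l) :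
    shiftedExp l c (Set.Iic t) = ENNReal.ofReal (1 - Real.exp (-l*(t-c))) := by
  rw [shiftedExp, withDensity_apply _ measurableSet_Iic]
  rcases le_or_gt t c with h | h
  · have h0 : ∀ s ∈ Set.Iic t,
        ENNReal.ofReal (if c < s then l * Real.exp (-l * (s - c)) else 0) = 0 := by
      intro s hs
      rw [if_neg (by simp only [Set.mem_Iic] at hs; linarith)]
      simp
    rw [setLIntegral_congr_fun measurableSet_Iic h0]
    rw [lintegral_zero]
    symm
    rw [ENNReal.ofReal_eq_zero]
    have : (1:ℝ) ≤ Real.exp (-l*(t-c)) := Real.one_le_exp (by nlinarith)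
    linarith
  · rw [← Set.Iic_union_Ioc_eq_Iic h.le,
      lintegral_union measurableSet_Ioc (Set.Iic_disjoint_Ioc le_rfl)]
    have h0 : ∀ s ∈ Set.Iic c,
        ENNReal.ofReal (if c < s then l * Real.exp (-l * (s - c)) else 0) = 0 := by
      intro s hs
      rw [if_neg (by simp only [Set.mem_Iic] at hs; linarith)]
      simp
    rw [setLIntegral_congr_fun measurableSet_Iic h0, lintegral_zero,
      zero_add]
    have h1 : ∀ s ∈ Set.Ioc c t,
        ENNReal.ofReal (if c < s then l * Real.exp (-l * (s - c)) else 0)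
          = ENNReal.ofReal (l * Real.exp (-l * (s - c))) := by
      intro s hs
      rw [if_pos hs.1]
    rw [setLIntegral_congr_fun measurableSet_Ioc h1]
    have hint : IntegrableOn (fun s => l * Real.exp (-l * (s - c))) (Set.Ioc c t) :=
      (continuous_expshift l c l).integrableOn_Ioc
    rw [← ofReal_integral_eq_lintegral_ofReal hint
      (Filter.Eventually.of_forall (fun s => by positivity))]
    rw [integral_exp_Ioc l c h.le]
    congr 1
    rw [show -l*(c-c) = 0 by ring, Real.exp_zero]

lemma shiftedExp_Ioi (l c t : ℝ) (hl : 0 < l) (hct : c ≤ t) :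
    shiftedExp l c (Set.Ioi t) = ENNReal.ofReal (Real.exp (-l*(t-c))) := by
  rw [shiftedExp, withDensity_apply _ measurableSet_Ioi]
  have h1 : ∀ s ∈ Set.Ioi t,
      ENNReal.ofReal (if c < s then l * Real.exp (-l * (s - c)) else 0)
        = ENNReal.ofReal (l * Real.exp (-l * (s - c))) := by
    intro s hs
    rw [if_pos (lt_of_le_of_lt hct hs)]
  rw [setLIntegral_congr_fun measurableSet_Ioi h1]
  have hint : IntegrableOn (fun s => l * Real.exp (-l * (s - c))) (Set.Ioi t) := by
    have h2 : IntegrableOn (fun x : ℝ => l * Real.exp (l*c) * Real.exp (-l * x)) (Set.Ioi t) :=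
      (exp_neg_integrableOn_Ioi t hl).const_mul (l * Real.exp (l*c))
    apply MeasureTheory.IntegrableOn.congr_fun h2 ?_ measurableSet_Ioi
    intro s _
    simp only []
    rw [mul_assoc, ← Real.exp_add]
    ring_nf
  have htend : Filter.Tendsto (fun u : ℝ => -Real.exp (-l*(u-c))) Filter.atTop (nhds 0) := by
    have hlin : Filter.Tendsto (fun u : ℝ => l*(u-c)) Filter.atTop Filter.atTop := by
      apply Filter.Tendsto.const_mul_atTop hl
      exact Filter.tendsto_atTop_add_const_right _ (-c) Filter.tendsto_id
    have := (Real.tendsto_exp_neg_atTop_nhds_zero.comp hlin).neg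
    rw [neg_zero] at this
    apply this.congr
    intro u
    simp only [Function.comp_apply]
    ring_nf
  have hval : ∫ s in Set.Ioi t, l * Real.exp (-l * (s - c)) = Real.exp (-l*(t-c)) := by
    have := integral_Ioi_of_hasDerivAt_of_tendsto'
      (fun x _ => hasDerivAt_expshift l c x) hint htend
    rw [this]
    ring
  rw [← ofReal_integral_eq_lintegral_ofReal hint
    (Filter.Eventually.of_forall (fun s => by positivity)), hval]

lemma isProbabilityMeasure_shiftedExp (l c : ℝ) (hl : 0 < l) :
    IsProbabilityMeasure (shiftedExp l c) := by
  constructor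
  rw [← Set.Iic_union_Ioi (a := c),
    measure_union (Set.Iic_disjoint_Ioi le_rfl) measurableSet_Ioi,
    shiftedExp_Iic l c c hl, shiftedExp_Ioi l c c hl le_rfl]
  rw [show -l*(c-c) = 0 by ring, Real.exp_zero]
  simp

lemma measure_count (N K : ℕ) (μ : MeasureTheory.Measure ℝ) [SigmaFinite μ] (t : ℝ) :
    MeasureTheory.Measure.pi (fun _ : Fin N => μ)
        {x : Fin N → ℝ | K ≤ Nat.card {i : Fin N // x i ≤ t}}
      = ∑ m ∈ Finset.Icc K N,
          (N.choose m : ENNReal) * (μ (Set.Iic t))^m * (μ (Set.Ioi t))^(N-m) := by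
  classical
  have hkey : ∀ (S : Finset (Fin N)) (x : Fin N → ℝ),
      x ∈ Set.univ.pi (fun i => if i ∈ S then Set.Iic t else Set.Ioi t)
        ↔ Finset.univ.filter (fun i => x i ≤ t) = S := by
    intro S x
    constructor
    · intro hx
      ext i
      simp only [Finset.mem_filter, Finset.mem_univ, true_and]
      constructor
      · intro hle
        by_contra hiS
        have := hx i (Set.mem_univ i)
        simp only [if_neg hiS, Set.mem_Ioi] at this
        linarith
      · intro hiS
        have := hx i (Set.mem_univ i)
        simpa [if_pos hiS] using this
    · intro hfS
      intro i _
      by_cases hxi : x i ≤ t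
      · have hiS : i ∈ S := by
          rw [← hfS]
          simp [hxi]
        simp [if_pos hiS, hxi]
      · have hiS : i ∉ S := by
          rw [← hfS]
          simp [hxi]
        simp only [if_neg hiS, Set.mem_Ioi]
        exact not_le.mp hxi
  set 𝒮 : Finset (Finset (Fin N)) := Finset.univ.powerset.filter (fun S => K ≤ S.card) with h𝒮
  have hset : {x : Fin N → ℝ | K ≤ Nat.card {i : Fin N // x i ≤ t}}
      = ⋃ S ∈ 𝒮, Set.univ.pi (fun i => if i ∈ S then Set.Iic t else Set.Ioi t) := by
    ext x
    simp only [Set.mem_setOf_eq, Set.mem_iUnion, Nat.card_eq_fintype_card, Fintype.card_subtype]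
    constructor
    · intro hx
      refine ⟨Finset.univ.filter (fun i => x i ≤ t), ?_, (hkey _ x).mpr rfl⟩
      simp only [h𝒮, Finset.mem_filter, Finset.mem_powerset]
      exact ⟨Finset.subset_univ _, hx⟩
    · rintro ⟨S, hS𝒮, hxS⟩
      have := (hkey S x).mp hxS
      rw [← this] at hS𝒮
      simp only [h𝒮, Finset.mem_filter] at hS𝒮
      exact hS𝒮.2
  rw [hset, measure_biUnion_finset ?hdisj ?hmeas]
  case hdisj =>
    intro S hS S' hS' hne
    simp only [Function.onFun]
    rw [Set.disjoint_left]
    intro x hxS hxS'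
    exact hne (((hkey S x).mp hxS).symm.trans ((hkey S' x).mp hxS'))
  case hmeas =>
    intro S _
    apply MeasurableSet.univ_pi
    intro i
    by_cases hiS : i ∈ S
    · simp [hiS, measurableSet_Iic]
    · simp [hiS, measurableSet_Ioi]
  have hpi : ∀ S : Finset (Fin N),
      MeasureTheory.Measure.pi (fun _ : Fin N => μ)
          (Set.univ.pi (fun i => if i ∈ S then Set.Iic t else Set.Ioi t))
        = (μ (Set.Iic t))^S.card * (μ (Set.Ioi t))^(N - S.card) := by
    intro S
    rw [MeasureTheory.Measure.pi_pi]
    have : ∀ i : Fin N, μ (if i ∈ S then Set.Iic t else Set.Ioi t)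
        = if i ∈ S then μ (Set.Iic t) else μ (Set.Ioi t) := by
      intro i
      exact apply_ite μ _ _ _
    simp only [this]
    rw [Finset.prod_ite, Finset.prod_const, Finset.prod_const]
    have h1 : Finset.univ.filter (fun i => i ∈ S) = S := by
      ext i; simp
    have h2 : (Finset.univ.filter (fun i => i ∉ S)).card = N - S.card := by
      have hsplit := Finset.card_filter_add_card_filter_not
        (s := Finset.univ) (p := fun i : Fin N => i ∈ S)
      rw [Finset.card_univ, Fintype.card_fin] at hsplit
      rw [h1] at hsplit
      omega
    rw [h1, h2]
  calc ∑ S ∈ 𝒮, MeasureTheory.Measure.pi (fun _ : Fin N => μ)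
          (Set.univ.pi (fun i => if i ∈ S then Set.Iic t else Set.Ioi t))
      = ∑ S ∈ 𝒮, (μ (Set.Iic t))^S.card * (μ (Set.Ioi t))^(N - S.card) := by
        exact Finset.sum_congr rfl (fun S _ => hpi S)
    _ = ∑ S ∈ (Finset.univ : Finset (Fin N)).powerset,
        (if K ≤ S.card then (μ (Set.Iic t))^S.card * (μ (Set.Ioi t))^(N - S.card) else 0) := by
        rw [h𝒮, Finset.sum_filter]
    _ = ∑ j ∈ Finset.range ((Finset.univ : Finset (Fin N)).card + 1),
        (Finset.univ : Finset (Fin N)).card.choose j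
          • (if K ≤ j then (μ (Set.Iic t))^j * (μ (Set.Ioi t))^(N - j) else 0) :=
        Finset.sum_powerset_apply_card
          (fun n => if K ≤ n then μ (Set.Iic t)^n * μ (Set.Ioi t)^(N - n) else 0)
    _ = ∑ j ∈ Finset.range (N+1),
        (if K ≤ j then (N.choose j : ENNReal) * (μ (Set.Iic t))^j * (μ (Set.Ioi t))^(N - j)
          else 0) := by
        rw [show (Finset.univ : Finset (Fin N)).card = N by
          rw [Finset.card_univ, Fintype.card_fin]]
        apply Finset.sum_congr rfl
        intro j _
        by_cases h : K ≤ j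
        · rw [if_pos h, if_pos h, nsmul_eq_mul, mul_assoc]
        · rw [if_neg h, if_neg h, smul_zero]
    _ = ∑ j ∈ (Finset.range (N+1)).filter (fun j => K ≤ j),
        ((N.choose j : ENNReal) * (μ (Set.Iic t))^j * (μ (Set.Ioi t))^(N - j)) :=
        (Finset.sum_filter _ _).symm
    _ = ∑ m ∈ Finset.Icc K N,
          (N.choose m : ENNReal) * (μ (Set.Iic t))^m * (μ (Set.Ioi t))^(N-m) := by
        apply Finset.sum_congr ?_ (fun _ _ => rfl)
        ext j
        simp only [Finset.mem_filter, Finset.mem_range, Finset.mem_Icc]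
        omega

end MeasureLemmas

section Density

noncomputable def okd (N K : ℕ) (l c : ℝ) (t : ℝ) : ℝ :=
  if c < t then ∑ j ∈ Finset.range K,
    ((K:ℝ) * (N.choose K : ℝ) * (((K-1).choose j : ℕ) : ℝ) * (-1)^j)
      * (l * Real.exp (-(l * ((N:ℝ)-(K:ℝ)+1+(j:ℝ))) * (t-c)))
  else 0

lemma exp_pow_rw {N K : ℕ} (hKN : K ≤ N) (l c : ℝ) (s : ℝ) (j : ℕ) :
    Real.exp (-(l * ((N:ℝ)-(K:ℝ)+1+(j:ℝ))) * (s-c)) = Real.exp (-l*(s-c)) ^ (N-K+1+j) := by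
  rw [← Real.exp_nat_mul]
  congr 1
  push_cast [Nat.cast_sub hKN]
  ring

lemma okd_sum_eq {N K : ℕ} (hK : 1 ≤ K) (hKN : K ≤ N) (l c : ℝ) (s : ℝ) :
    ∑ j ∈ Finset.range K,
      ((K:ℝ) * (N.choose K : ℝ) * (((K-1).choose j : ℕ) : ℝ) * (-1)^j)
        * (l * Real.exp (-(l * ((N:ℝ)-(K:ℝ)+1+(j:ℝ))) * (s-c)))
    = ((K:ℝ) * (N.choose K : ℝ) * l) * Real.exp (-l*(s-c))^(N-K+1)
        * (1 - Real.exp (-l*(s-c)))^(K-1) := by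
  rw [← binom_neg K hK (Real.exp (-l*(s-c))), Finset.mul_sum]
  apply Finset.sum_congr rfl
  intro j _
  rw [exp_pow_rw hKN, pow_add]
  ring

lemma okd_nonneg {N K : ℕ} (hK : 1 ≤ K) (hKN : K ≤ N) {l : ℝ} (c : ℝ) (hl : 0 < l) (s : ℝ) :
    0 ≤ okd N K l c s := by
  rw [okd]
  split
  · next hcs =>
    rw [okd_sum_eq hK hKN]
    have hE1 : Real.exp (-l*(s-c)) ≤ 1 := by
      rw [Real.exp_le_one_iff]
      nlinarith
    apply mul_nonneg (mul_nonneg (by positivity) (by positivity))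
    apply pow_nonneg
    linarith
  · exact le_refl 0

lemma measurable_okd (N K : ℕ) (l c : ℝ) : Measurable (okd N K l c) := by
  apply Measurable.ite (measurableSet_lt measurable_const measurable_id)
  · apply Continuous.measurable
    apply continuous_finset_sum
    intro j _
    exact (continuous_const.mul (continuous_expshift (l * ((N:ℝ)-(K:ℝ)+1+(j:ℝ))) c l))
  · exact measurable_const

end Density

section DensityIntegrals

open Set

lemma okd_eq_indicator (N K : ℕ) (l c : ℝ) :
    okd N K l c = Set.indicator (Set.Ioi c) (fun s => ∑ j ∈ Finset.range K,
      ((K:ℝ) * (N.choose K : ℝ) * (((K-1).choose j : ℕ) : ℝ) * (-1)^j)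
        * (l * Real.exp (-(l * ((N:ℝ)-(K:ℝ)+1+(j:ℝ))) * (s-c)))) := by
  funext s
  rw [okd, Set.indicator_apply]
  simp only [Set.mem_Ioi]

lemma continuous_okd_sum (N K : ℕ) (l c : ℝ) :
    Continuous (fun s : ℝ => ∑ j ∈ Finset.range K,
      ((K:ℝ) * (N.choose K : ℝ) * (((K-1).choose j : ℕ) : ℝ) * (-1)^j)
        * (l * Real.exp (-(l * ((N:ℝ)-(K:ℝ)+1+(j:ℝ))) * (s-c)))) := by
  apply continuous_finset_sum
  intro j _
  exact continuous_const.mul (continuous_expshift (l * ((N:ℝ)-(K:ℝ)+1+(j:ℝ))) c l)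

lemma integrableOn_okd_Ioc (N K : ℕ) (l c x y : ℝ) :
    MeasureTheory.IntegrableOn (okd N K l c) (Set.Ioc x y) := by
  rw [okd_eq_indicator]
  exact ((continuous_okd_sum N K l c).integrableOn_Ioc).indicator measurableSet_Ioi

lemma okd_integral {N K : ℕ} (hK : 1 ≤ K) (hKN : K ≤ N) {l c t : ℝ} (hl : 0 < l)
    (hct : c ≤ t) :
    ∫ s in Set.Ioc c t, okd N K l c s
      = ∑ j ∈ Finset.range K,
          ((K:ℝ) * (N.choose K : ℝ) * (((K-1).choose j : ℕ) : ℝ) * (-1)^j) / ((N:ℝ)-K+1+j)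
            * (1 - Real.exp (-(l * ((N:ℝ)-(K:ℝ)+1+(j:ℝ))) * (t-c))) := by
  have hcong : ∀ s ∈ Set.Ioc c t, okd N K l c s = ∑ j ∈ Finset.range K,
      ((K:ℝ) * (N.choose K : ℝ) * (((K-1).choose j : ℕ) : ℝ) * (-1)^j)
        * (l * Real.exp (-(l * ((N:ℝ)-(K:ℝ)+1+(j:ℝ))) * (s-c))) := by
    intro s hs
    rw [okd, if_pos hs.1]
  rw [MeasureTheory.setIntegral_congr_fun measurableSet_Ioc hcong]
  rw [MeasureTheory.integral_finset_sum]
  · apply Finset.sum_congr rfl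
    intro j _
    have hupos : (0:ℝ) < (N:ℝ) - K + 1 + j := by
      nlinarith [(by exact_mod_cast hKN : (K:ℝ) ≤ (N:ℝ)), Nat.cast_nonneg (α := ℝ) j]
    have hlu : 0 < l * ((N:ℝ)-(K:ℝ)+1+(j:ℝ)) := by positivity
    have hrw : ∀ s : ℝ,
        ((K:ℝ) * (N.choose K : ℝ) * (((K-1).choose j : ℕ) : ℝ) * (-1)^j)
          * (l * Real.exp (-(l * ((N:ℝ)-(K:ℝ)+1+(j:ℝ))) * (s-c)))
        = (((K:ℝ) * (N.choose K : ℝ) * (((K-1).choose j : ℕ) : ℝ) * (-1)^j) / ((N:ℝ)-K+1+j))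
          * ((l * ((N:ℝ)-(K:ℝ)+1+(j:ℝ))) * Real.exp (-(l * ((N:ℝ)-(K:ℝ)+1+(j:ℝ))) * (s-c))) := by
      intro s
      field_simp
    simp only [hrw]
    rw [MeasureTheory.integral_const_mul, integral_exp_Ioc (l * ((N:ℝ)-(K:ℝ)+1+(j:ℝ))) c hct]
    rw [show -(l * ((N:ℝ)-(K:ℝ)+1+(j:ℝ)))*(c-c) = 0 by ring, Real.exp_zero]
  · intro j _
    exact ((continuous_const.mul
      (continuous_expshift (l * ((N:ℝ)-(K:ℝ)+1+(j:ℝ))) c l))).integrableOn_Ioc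

lemma withDensity_okd_Iic_zero (N K : ℕ) (l c t : ℝ) (h : t ≤ c) :
    (MeasureTheory.volume.withDensity fun s => ENNReal.ofReal (okd N K l c s)) (Set.Iic t)
      = 0 := by
  rw [MeasureTheory.withDensity_apply _ measurableSet_Iic]
  have h0 : ∀ s ∈ Set.Iic t, ENNReal.ofReal (okd N K l c s) = 0 := by
    intro s hs
    rw [okd, if_neg (by simp only [Set.mem_Iic] at hs; linarith)]
    simp
  rw [MeasureTheory.setLIntegral_congr_fun measurableSet_Iic h0]
  exact MeasureTheory.lintegral_zero

lemma withDensity_okd_Iic {N K : ℕ} (hK : 1 ≤ K) (hKN : K ≤ N) {l c t : ℝ} (hl : 0 < l)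
    (hct : c ≤ t) :
    (MeasureTheory.volume.withDensity fun s => ENNReal.ofReal (okd N K l c s)) (Set.Iic t)
      = ENNReal.ofReal (∫ s in Set.Ioc c t, okd N K l c s) := by
  rw [MeasureTheory.withDensity_apply _ measurableSet_Iic]
  rw [← Set.Iic_union_Ioc_eq_Iic hct,
    MeasureTheory.lintegral_union measurableSet_Ioc (Set.Iic_disjoint_Ioc le_rfl)]
  have h0 : ∀ s ∈ Set.Iic c, ENNReal.ofReal (okd N K l c s) = 0 := by
    intro s hs
    rw [okd, if_neg (by simp only [Set.mem_Iic] at hs; linarith)]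
    simp
  rw [MeasureTheory.setLIntegral_congr_fun measurableSet_Iic h0,
    MeasureTheory.lintegral_zero, zero_add]
  rw [← MeasureTheory.ofReal_integral_eq_lintegral_ofReal (integrableOn_okd_Ioc N K l c c t)
    (Filter.Eventually.of_forall (fun s => okd_nonneg hK hKN c hl s))]

lemma sq_exp_integral {a : ℝ} (ha : 0 < a) {c T : ℝ} (hcT : c ≤ T) :
    ∫ s in c..T, s^2 * Real.exp (-a*(s-c))
      = (c^2/a + 2*c/a^2 + 2/a^3)
        - (T^2/a + 2*T/a^2 + 2/a^3) * Real.exp (-a*(T-c)) := by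
  have hder : ∀ s : ℝ, HasDerivAt
      (fun s : ℝ => -((s^2/a + 2*s/a^2 + 2/a^3) * Real.exp (-a*(s-c))))
      (s^2 * Real.exp (-a*(s-c))) s := by
    intro s
    have h1 : HasDerivAt (fun u : ℝ => u^2/a + 2*u/a^2 + 2/a^3) (2*s/a + 2/a^2) s := by
      have h := (((hasDerivAt_pow 2 s).div_const a).add
        (((hasDerivAt_id s).const_mul 2).div_const (a^2))).add_const (2/a^3)
      refine h.congr_deriv (Eq.symm ?_)
      push_cast
      ring
    have h2 : HasDerivAt (fun u : ℝ => Real.exp (-a*(u-c))) (-a * Real.exp (-a*(s-c))) s := by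
      have h0 : HasDerivAt (fun u : ℝ => -a*(u-c)) (-a) s := by
        simpa using ((hasDerivAt_id s).sub_const c).const_mul (-a)
      have := h0.exp
      convert this using 1
      ring
    have h3 := (h1.mul h2).neg
    refine h3.congr_deriv (Eq.symm ?_)
    field_simp
    ring
  rw [intervalIntegral.integral_eq_sub_of_hasDerivAt (fun s _ => hder s)
    ((by continuity : Continuous fun s : ℝ => s^2 * Real.exp (-a*(s-c))).intervalIntegrable c T)]
  rw [show -a*(c-c) = 0 by ring, Real.exp_zero]
  ring

end DensityIntegrals

set_option maxHeartbeats 1000000 in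
theorem cond_second_moment_orderStat_fixed_deadline
    {Ω : Type*} [MeasurableSpace Ω] (P : MeasureTheory.Measure Ω) [IsProbabilityMeasure P]
    (N K : ℕ) (hK : 1 ≤ K) (hKN : K ≤ N)
    (l c TD : ℝ) (hl : 0 < l) (hc : 0 ≤ c) (hTD : c < TD)
    (T : Fin N → Ω → ℝ) (hT : ∀ i, Measurable (T i))
    (hlaw : MeasureTheory.Measure.map (fun ω i => T i ω) P
      = MeasureTheory.Measure.pi (fun _ : Fin N => shiftedExp l c))
    (B : ℕ → ℝ) (hB : ∀ j, B j = (K : ℝ) * (N.choose K : ℝ) * ((K - 1).choose j : ℝ) * (-1) ^ j)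
    (U : ℕ → ℝ) (hU : ∀ j, U j = (N : ℝ) - K + 1 + j)
    (Z : ℝ) (hZ : Z = ∑ i ∈ Finset.range K, B i * Real.exp (-l * U i * (TD - c)) / U i) :
    (∫ ω, (orderStat T K ω) ^ 2 ∂(P[|{ω | orderStat T K ω < TD}]))
      = (1 / (1 - Z)) * ∑ j ∈ Finset.range K,
          (B j / (l ^ 2 * (U j) ^ 3))
            * ((1 + c * l * U j) ^ 2 + 1
                - ((1 + TD * l * U j) ^ 2 + 1) * Real.exp (-l * U j * (TD - c))) := by
  classical
  have hmos : Measurable (orderStat T K) := measurable_orderStat hK hKN T hT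
  have hFmeas : Measurable (fun ω (i : Fin N) => T i ω) := measurable_pi_lambda _ hT
  haveI hPμ : IsProbabilityMeasure (shiftedExp l c) := isProbabilityMeasure_shiftedExp l c hl
  -- CDF equality
  have hcdf : ∀ t : ℝ, MeasureTheory.Measure.map (orderStat T K) P (Set.Iic t)
      = (MeasureTheory.volume.withDensity fun s => ENNReal.ofReal (okd N K l c s))
          (Set.Iic t) := by
    intro t
    rw [MeasureTheory.Measure.map_apply hmos measurableSet_Iic]
    have hpre : orderStat T K ⁻¹' (Set.Iic t)
        = (fun ω (i : Fin N) => T i ω) ⁻¹'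
            {x : Fin N → ℝ | K ≤ Nat.card {i : Fin N // x i ≤ t}} := by
      ext ω
      simp only [Set.mem_preimage, Set.mem_Iic, Set.mem_setOf_eq]
      exact orderStat_le_iff hK hKN (fun i => T i ω) t
    rw [hpre, ← MeasureTheory.Measure.map_apply hFmeas
      (measurableSet_count K (fun i (x : Fin N → ℝ) => x i)
        (fun i => measurable_pi_apply i) t), hlaw]
    rw [measure_count N K (shiftedExp l c) t]
    rcases le_or_gt t c with h | h
    · rw [shiftedExp_Iic l c t hl]
      have hz : ENNReal.ofReal (1 - Real.exp (-l*(t-c))) = 0 := by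
        rw [ENNReal.ofReal_eq_zero]
        have := Real.one_le_exp (show 0 ≤ -l*(t-c) by nlinarith)
        linarith
      rw [hz, withDensity_okd_Iic_zero N K l c t h]
      apply Finset.sum_eq_zero
      intro m hm
      simp only [Finset.mem_Icc] at hm
      rw [zero_pow (by omega : m ≠ 0), mul_zero, zero_mul]
    · rw [shiftedExp_Iic l c t hl, shiftedExp_Ioi l c t hl h.le,
        withDensity_okd_Iic hK hKN hl h.le, okd_integral hK hKN hl h.le]
      have hqnn : (0:ℝ) ≤ Real.exp (-l*(t-c)) := (Real.exp_pos _).le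
      have hpnn : (0:ℝ) ≤ 1 - Real.exp (-l*(t-c)) := by
        have : Real.exp (-l*(t-c)) ≤ 1 := by
          rw [Real.exp_le_one_iff]
          nlinarith
        linarith
      have hL : ∀ m ∈ Finset.Icc K N,
          (N.choose m : ENNReal) * (ENNReal.ofReal (1 - Real.exp (-l*(t-c))))^m
              * (ENNReal.ofReal (Real.exp (-l*(t-c))))^(N-m)
            = ENNReal.ofReal ((N.choose m : ℝ) * (1 - Real.exp (-l*(t-c)))^m
              * (Real.exp (-l*(t-c)))^(N-m)) := by
        intro m _
        rw [← ENNReal.ofReal_pow hpnn, ← ENNReal.ofReal_pow hqnn,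
          ← ENNReal.ofReal_natCast (N.choose m),
          ← ENNReal.ofReal_mul (by positivity), ← ENNReal.ofReal_mul (by positivity)]
      rw [Finset.sum_congr rfl hL,
        ← ENNReal.ofReal_sum_of_nonneg (fun m _ => by positivity)]
      congr 1
      have hpoly := poly_id N K hK hKN (Real.exp (-l*(t-c)))
      simp only [exp_pow_rw hKN]
      exact hpoly
  have hμK : MeasureTheory.Measure.map (orderStat T K) P
      = MeasureTheory.volume.withDensity fun s => ENNReal.ofReal (okd N K l c s) := by
    haveI : IsProbabilityMeasure (MeasureTheory.Measure.map (orderStat T K) P) :=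
      MeasureTheory.Measure.isProbabilityMeasure_map hmos.aemeasurable
    exact MeasureTheory.Measure.ext_of_Iic _ _ hcdf
  -- 1 - Z equals the mass below TD
  have hZeq : 1 - Z = ∫ s in Set.Ioc c TD, okd N K l c s := by
    rw [okd_integral hK hKN hl hTD.le, hZ]
    have hsplit : ∑ j ∈ Finset.range K,
        ((K:ℝ) * (N.choose K : ℝ) * (((K-1).choose j : ℕ) : ℝ) * (-1)^j) / ((N:ℝ)-K+1+j)
          * (1 - Real.exp (-(l * ((N:ℝ)-(K:ℝ)+1+(j:ℝ))) * (TD-c)))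
        = (∑ j ∈ Finset.range K,
            ((K:ℝ) * (N.choose K : ℝ) * (((K-1).choose j : ℕ) : ℝ) * (-1)^j) / ((N:ℝ)-K+1+j))
          - ∑ j ∈ Finset.range K,
            ((K:ℝ) * (N.choose K : ℝ) * (((K-1).choose j : ℕ) : ℝ) * (-1)^j) / ((N:ℝ)-K+1+j)
              * Real.exp (-(l * ((N:ℝ)-(K:ℝ)+1+(j:ℝ))) * (TD-c)) := by
      rw [← Finset.sum_sub_distrib]
      apply Finset.sum_congr rfl
      intro j _
      ring
    rw [hsplit, sum_BU_eq_one N K hK hKN]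
    congr 1
    apply Finset.sum_congr rfl
    intro j _
    rw [hB j, hU j, neg_mul l ((N:ℝ)-K+1+j)]
    ring
  -- positivity of 1 - Z
  have hbinom : 1 - Z = ∑ m ∈ Finset.Icc K N,
      (N.choose m : ℝ) * (1 - Real.exp (-l*(TD-c)))^m * (Real.exp (-l*(TD-c)))^(N-m) := by
    rw [hZeq, okd_integral hK hKN hl hTD.le]
    have hpoly := poly_id N K hK hKN (Real.exp (-l*(TD-c)))
    simp only [exp_pow_rw hKN]
    exact hpoly.symm
  have hq1 : Real.exp (-l*(TD-c)) < 1 := by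
    rw [Real.exp_lt_one_iff]
    nlinarith
  have hqpos : (0:ℝ) < Real.exp (-l*(TD-c)) := Real.exp_pos _
  have hpos : 0 < 1 - Z := by
    rw [hbinom]
    apply Finset.sum_pos'
    · intro m hm
      have : (0:ℝ) ≤ 1 - Real.exp (-l*(TD-c)) := by linarith
      positivity
    · refine ⟨K, Finset.mem_Icc.mpr ⟨le_rfl, hKN⟩, ?_⟩
      have h1 : (0:ℝ) < (N.choose K : ℝ) := by
        exact_mod_cast Nat.choose_pos hKN
      have h2 : (0:ℝ) < 1 - Real.exp (-l*(TD-c)) := by linarith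
      positivity
  -- measure of the conditioning event
  have hsetEq : {ω | orderStat T K ω < TD} = orderStat T K ⁻¹' (Set.Iio TD) := rfl
  have hPs : P {ω | orderStat T K ω < TD} = ENNReal.ofReal (1 - Z) := by
    rw [hsetEq, ← MeasureTheory.Measure.map_apply hmos measurableSet_Iio, hμK]
    have hsing : (MeasureTheory.volume.withDensity
        fun s => ENNReal.ofReal (okd N K l c s)) {TD} = 0 :=
      MeasureTheory.withDensity_absolutelyContinuous MeasureTheory.volume _
        Real.volume_singleton
    have hIic : (MeasureTheory.volume.withDensity
          fun s => ENNReal.ofReal (okd N K l c s)) (Set.Iic TD)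
        = (MeasureTheory.volume.withDensity
          fun s => ENNReal.ofReal (okd N K l c s)) (Set.Iio TD) := by
      rw [← Set.Iio_union_right,
        MeasureTheory.measure_union (by simp) (measurableSet_singleton TD), hsing, add_zero]
    rw [← hIic, withDensity_okd_Iic hK hKN hl hTD.le, ← hZeq]
  -- unfold conditional expectation
  unfold ProbabilityTheory.cond
  rw [MeasureTheory.integral_smul_measure]
  have hrestrict : ∫ ω in {ω | orderStat T K ω < TD}, (orderStat T K ω)^2 ∂P
      = ∫ x in Set.Iio TD, x^2
          ∂(MeasureTheory.volume.withDensity fun s => ENNReal.ofReal (okd N K l c s)) := by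
    rw [← hμK, MeasureTheory.setIntegral_map measurableSet_Iio
      (by fun_prop : MeasureTheory.AEStronglyMeasurable (fun x : ℝ => x^2)
        (MeasureTheory.Measure.map (orderStat T K) P))
      hmos.aemeasurable]
    rfl
  rw [hrestrict]
  -- compute the set integral against the density
  have hIioInt : ∫ x in Set.Iio TD, x^2
        ∂(MeasureTheory.volume.withDensity fun s => ENNReal.ofReal (okd N K l c s))
      = ∫ x in Set.Ioo c TD, okd N K l c x * x^2 := by
    rw [MeasureTheory.restrict_withDensity measurableSet_Iio]
    rw [show (fun s => ENNReal.ofReal (okd N K l c s))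
        = (fun s => ((okd N K l c s).toNNReal : ENNReal)) from rfl]
    rw [integral_withDensity_eq_integral_smul
      (by exact (measurable_okd N K l c).real_toNNReal) (fun x => x^2)]
    have hsmul : ∀ x : ℝ, (okd N K l c x).toNNReal • x^2 = okd N K l c x * x^2 := by
      intro x
      rw [NNReal.smul_def, smul_eq_mul, Real.coe_toNNReal _ (okd_nonneg hK hKN c hl x)]
    simp only [hsmul]
    rw [← Set.Iic_union_Ioo_eq_Iio hTD,
      MeasureTheory.setIntegral_union
        (by
          rw [Set.disjoint_left]
          rintro a ha ⟨h1, _⟩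
          exact absurd h1 (not_lt.mpr ha) : Disjoint (Set.Iic c) (Set.Ioo c TD))
        measurableSet_Ioo ?int1 ?int2]
    · have h0 : ∀ x ∈ Set.Iic c, okd N K l c x * x^2 = 0 := by
        intro x hx
        rw [okd, if_neg (by simp only [Set.mem_Iic] at hx; linarith), zero_mul]
      rw [MeasureTheory.setIntegral_congr_fun measurableSet_Iic h0]
      simp
    case int1 =>
      apply MeasureTheory.integrableOn_zero.congr_fun ?_ measurableSet_Iic
      intro x hx
      simp only [Pi.zero_apply]
      rw [okd, if_neg (by simp only [Set.mem_Iic] at hx; linarith), zero_mul]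
    case int2 =>
      apply MeasureTheory.IntegrableOn.mono_set ?_ Set.Ioo_subset_Ioc_self
      have hind : (fun x => okd N K l c x * x^2)
          = Set.indicator (Set.Ioi c) (fun x => (∑ j ∈ Finset.range K,
              ((K:ℝ) * (N.choose K : ℝ) * (((K-1).choose j : ℕ) : ℝ) * (-1)^j)
                * (l * Real.exp (-(l * ((N:ℝ)-(K:ℝ)+1+(j:ℝ))) * (x-c)))) * x^2) := by
        funext x
        rw [okd, Set.indicator_apply]
        simp only [Set.mem_Ioi]
        split
        · rfl
        · rw [zero_mul]
      rw [hind]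
      exact (((continuous_okd_sum N K l c).mul (by continuity)).integrableOn_Ioc).indicator
        measurableSet_Ioi
  rw [hIioInt, hPs]
  have hscal : (ENNReal.ofReal (1 - Z))⁻¹.toReal = (1-Z)⁻¹ := by
    rw [ENNReal.toReal_inv, ENNReal.toReal_ofReal hpos.le]
  rw [hscal, smul_eq_mul, one_div]
  congr 1
  have hcong : ∀ x ∈ Set.Ioo c TD, okd N K l c x * x^2
      = (∑ j ∈ Finset.range K,
          ((K:ℝ) * (N.choose K : ℝ) * (((K-1).choose j : ℕ) : ℝ) * (-1)^j)
            * (l * Real.exp (-(l * ((N:ℝ)-(K:ℝ)+1+(j:ℝ))) * (x-c)))) * x^2 := by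
    intro x hx
    rw [okd, if_pos hx.1]
  rw [MeasureTheory.setIntegral_congr_fun measurableSet_Ioo hcong,
    ← MeasureTheory.integral_Ioc_eq_integral_Ioo,
    ← intervalIntegral.integral_of_le hTD.le]
  have hmove : (fun x : ℝ => (∑ j ∈ Finset.range K,
          ((K:ℝ) * (N.choose K : ℝ) * (((K-1).choose j : ℕ) : ℝ) * (-1)^j)
            * (l * Real.exp (-(l * ((N:ℝ)-(K:ℝ)+1+(j:ℝ))) * (x-c)))) * x^2)
      = fun x : ℝ => ∑ j ∈ Finset.range K,
          (((K:ℝ) * (N.choose K : ℝ) * (((K-1).choose j : ℕ) : ℝ) * (-1)^j) * l)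
            * (x^2 * Real.exp (-(l * ((N:ℝ)-(K:ℝ)+1+(j:ℝ))) * (x-c))) := by
    funext x
    rw [Finset.sum_mul]
    apply Finset.sum_congr rfl
    intro j _
    ring
  rw [hmove, intervalIntegral.integral_finset_sum]
  · apply Finset.sum_congr rfl
    intro j _
    have hupos : (0:ℝ) < (N:ℝ) - K + 1 + j := by
      nlinarith [(by exact_mod_cast hKN : (K:ℝ) ≤ (N:ℝ)), Nat.cast_nonneg (α := ℝ) j]
    have hlu : (0:ℝ) < l * ((N:ℝ)-(K:ℝ)+1+(j:ℝ)) := by positivity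
    rw [intervalIntegral.integral_const_mul, sq_exp_integral hlu hTD.le]
    rw [hB j, hU j]
    have hne : ((N:ℝ) - K + 1 + j) ≠ 0 := hupos.ne'
    have hlne : l ≠ 0 := hl.ne'
    simp only [neg_mul]
    field_simp
    ring
  · intro j _
    apply Continuous.intervalIntegrable
    exact continuous_const.mul ((continuous_pow 2).mul
      (Real.continuous_exp.comp (continuous_const.mul (continuous_id.sub continuous_const))))
end

section
/- Let T₁,...,T_N be i.i.d. continuous random variables (e.g., shifted exponential with rate λ_s, shift c), T_n one of them, T_N(K) the K-th order statistic, and T_D > c a constant. Then P(T_D < min{T_N(K), T_n}) = ((N-K)/N)·Z_K + (1/N)·Σ_{h=1}^K Z_h, where Z_h = P(T_D < T_N(h)). -/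
open MeasureTheory ProbabilityTheory Real

section AuxLemmas

open Finset in
section

-- Lemma A: order stat threshold iff count
lemma aux_orderStat_gt_iff {N K : ℕ} (hK : 1 ≤ K) (hKN : K ≤ N) (x : Fin N → ℝ) (TD : ℝ) :
    TD < sInf {t : ℝ | K ≤ Nat.card {i : Fin N // x i ≤ t}} ↔
      ((Finset.univ.filter (fun i => x i ≤ TD)).card < K) := by
  classical
  have hcard : ∀ t : ℝ, Nat.card {i : Fin N // x i ≤ t}
      = ((Finset.univ : Finset (Fin N)).filter (fun i => x i ≤ t)).card := by
    intro t
    rw [Nat.card_eq_fintype_card, Fintype.card_subtype]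
  set S := {t : ℝ | K ≤ Nat.card {i : Fin N // x i ≤ t}} with hS
  have hN : 0 < N := lt_of_lt_of_le hK hKN
  have hne : (Finset.univ : Finset (Fin N)).Nonempty := by
    simpa [Finset.univ_nonempty_iff] using (Fin.pos_iff_nonempty.mp hN)
  have hMS : (Finset.univ.sup' hne x) ∈ S := by
    have : (Finset.univ : Finset (Fin N)).filter (fun i => x i ≤ Finset.univ.sup' hne x)
        = Finset.univ := by
      apply Finset.filter_true_of_mem
      intro i _
      exact Finset.le_sup' x (Finset.mem_univ i)
    simp only [hS, Set.mem_setOf_eq, hcard, this, Finset.card_univ, Fintype.card_fin]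
    exact hKN
  have hSne : S.Nonempty := ⟨_, hMS⟩
  have hbdd : BddBelow S := by
    refine ⟨Finset.univ.inf' hne x, ?_⟩
    intro t ht
    have hcnt : K ≤ ((Finset.univ : Finset (Fin N)).filter (fun i => x i ≤ t)).card := by
      simpa [hS, hcard, Fintype.card_subtype] using ht
    have hfne : ((Finset.univ : Finset (Fin N)).filter (fun i => x i ≤ t)).Nonempty := by
      rw [← Finset.card_pos]; omega
    obtain ⟨i, hi⟩ := hfne
    have hxi : x i ≤ t := (Finset.mem_filter.mp hi).2
    exact le_trans (Finset.inf'_le x (Finset.mem_univ i)) hxi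
  constructor
  · intro h
    by_contra hc
    push_neg at hc
    have hTD : TD ∈ S := by simpa [hS, Set.mem_setOf_eq, hcard, Fintype.card_subtype] using hc
    have := csInf_le hbdd hTD
    linarith
  · intro h
    have hex : ((Finset.univ : Finset (Fin N)).filter (fun i => TD < x i)).Nonempty := by
      by_contra hall
      rw [Finset.not_nonempty_iff_eq_empty, Finset.filter_eq_empty_iff] at hall
      have : (Finset.univ : Finset (Fin N)).filter (fun i => x i ≤ TD) = Finset.univ := by
        apply Finset.filter_true_of_mem
        intro i _
        exact le_of_not_gt (hall (Finset.mem_univ i))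
      rw [this, Finset.card_univ, Fintype.card_fin] at h
      omega
    set m := ((Finset.univ : Finset (Fin N)).filter (fun i => TD < x i)).inf' hex x with hm
    have hTDm : TD < m := by
      rw [hm, Finset.lt_inf'_iff]
      intro i hi
      exact (Finset.mem_filter.mp hi).2
    have hlow : ∀ t ∈ S, m ≤ t := by
      intro t ht
      by_contra hlt
      push_neg at hlt
      have hcnt : K ≤ ((Finset.univ : Finset (Fin N)).filter (fun i => x i ≤ t)).card := by
        simpa [hS, hcard, Fintype.card_subtype] using ht
      have hsub : (Finset.univ : Finset (Fin N)).filter (fun i => x i ≤ t)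
          ⊆ (Finset.univ : Finset (Fin N)).filter (fun i => x i ≤ TD) := by
        intro i hi
        have hxi : x i ≤ t := (Finset.mem_filter.mp hi).2
        refine Finset.mem_filter.mpr ⟨Finset.mem_univ i, ?_⟩
        by_contra hgt
        push_neg at hgt
        have : m ≤ x i := Finset.inf'_le x (Finset.mem_filter.mpr ⟨Finset.mem_univ i, hgt⟩)
        linarith
      have := Finset.card_le_card hsub
      omega
    exact lt_of_lt_of_le hTDm (le_csInf hSne hlow)


lemma aux_box_eq {N : ℕ} (TD : ℝ) (s : Finset (Fin N)) :
    {x : Fin N → ℝ | ∀ i, x i ≤ TD ↔ i ∈ s}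
      = Set.pi Set.univ (fun i => if i ∈ s then Set.Iic TD else Set.Ioi TD) := by
  ext x
  simp only [Set.mem_setOf_eq, Set.mem_pi, Set.mem_univ, forall_true_left]
  constructor
  · intro h i
    by_cases hi : i ∈ s <;> simp [hi, (h i)] <;>
    · rcases lt_or_ge TD (x i) with h' | h'
      · exact h'
      · exact absurd ((h i).mp h') (by simpa [hi] using (h i))
  · intro h i
    by_cases hi : i ∈ s
    · have := h i; simp [hi] at this; simp [hi, this]
    · have := h i; simp [hi] at this; simp [hi]; linarith

lemma aux_box_measurable {N : ℕ} (TD : ℝ) (s : Finset (Fin N)) :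
    MeasurableSet {x : Fin N → ℝ | ∀ i, x i ≤ TD ↔ i ∈ s} := by
  rw [aux_box_eq]
  exact MeasurableSet.univ_pi (fun i => by
    by_cases hi : i ∈ s <;> simp [hi, measurableSet_Iic, measurableSet_Ioi])

lemma aux_pi_box {N : ℕ} (μ : Measure ℝ) [IsProbabilityMeasure μ] (TD : ℝ) (s : Finset (Fin N)) :
    Measure.pi (fun _ : Fin N => μ) {x : Fin N → ℝ | ∀ i, x i ≤ TD ↔ i ∈ s}
      = μ (Set.Iic TD) ^ s.card * μ (Set.Ioi TD) ^ (N - s.card) := by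
  classical
  rw [aux_box_eq, Measure.pi_pi]
  have : ∀ i : Fin N, μ (if i ∈ s then Set.Iic TD else Set.Ioi TD)
      = if i ∈ s then μ (Set.Iic TD) else μ (Set.Ioi TD) := by
    intro i; by_cases hi : i ∈ s <;> simp [hi]
  simp_rw [this]
  rw [Finset.prod_ite, Finset.prod_const, Finset.prod_const]
  congr 1
  · congr 1
    simp [Finset.filter_mem_eq_inter]
  · congr 1
    have : Finset.filter (fun i => ¬ i ∈ s) Finset.univ = sᶜ := by
      ext i; simp
    rw [this, Finset.card_compl, Fintype.card_fin]


lemma aux_event_eq_biUnion {N : ℕ} (TD : ℝ) (Q : Finset (Fin N) → Prop) [DecidablePred Q] :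
    {x : Fin N → ℝ | Q (Finset.univ.filter (fun i => x i ≤ TD))}
      = ⋃ s ∈ Finset.univ.powerset.filter Q, {x : Fin N → ℝ | ∀ i, x i ≤ TD ↔ i ∈ s} := by
  classical
  ext x
  simp only [Set.mem_setOf_eq, Set.mem_iUnion, Finset.mem_filter, Finset.mem_powerset]
  constructor
  · intro h
    exact ⟨Finset.univ.filter (fun i => x i ≤ TD), ⟨Finset.filter_subset _ _, h⟩,
      fun i => by simp⟩
  · rintro ⟨s, ⟨-, hQ⟩, hbox⟩
    have : Finset.univ.filter (fun i => x i ≤ TD) = s := by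
      ext i; simp [hbox i]
    rwa [this]

lemma aux_event_measurable {N : ℕ} (TD : ℝ) (Q : Finset (Fin N) → Prop) [DecidablePred Q] :
    MeasurableSet {x : Fin N → ℝ | Q (Finset.univ.filter (fun i => x i ≤ TD))} := by
  rw [aux_event_eq_biUnion]
  exact (Finset.univ.powerset.filter Q).measurableSet_biUnion
    (fun s _ => aux_box_measurable TD s)

lemma aux_pi_event {N : ℕ} (μ : Measure ℝ) [IsProbabilityMeasure μ] (TD : ℝ)
    (Q : Finset (Fin N) → Prop) [DecidablePred Q] :
    Measure.pi (fun _ : Fin N => μ) {x : Fin N → ℝ | Q (Finset.univ.filter (fun i => x i ≤ TD))}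
      = ∑ s ∈ Finset.univ.powerset.filter Q,
          μ (Set.Iic TD) ^ s.card * μ (Set.Ioi TD) ^ (N - s.card) := by
  rw [aux_event_eq_biUnion]
  rw [measure_biUnion_finset ?hd (fun s _ => aux_box_measurable TD s)]
  · exact Finset.sum_congr rfl (fun s _ => aux_pi_box μ TD s)
  case hd =>
    intro s _ t _ hst
    refine Set.disjoint_left.mpr (fun x hxs hxt => hst ?_)
    have hs : Finset.univ.filter (fun i => x i ≤ TD) = s := by
      ext i; simpa using (hxs i)
    have ht : Finset.univ.filter (fun i => x i ≤ TD) = t := by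
      ext i; simpa using (hxt i)
    rw [← hs, ht]


lemma aux_sum_card_lt {M : Type*} [AddCommMonoid M] {α : Type*} [DecidableEq α]
    (u : Finset α) (K : ℕ) (g : ℕ → M) :
    ∑ s ∈ u.powerset.filter (fun s => s.card < K), g s.card
      = ∑ j ∈ Finset.range K, (u.card.choose j) • g j := by
  have hset : u.powerset.filter (fun s => s.card < K)
      = (Finset.range K).biUnion (fun j => u.powersetCard j) := by
    ext s
    simp only [Finset.mem_filter, Finset.mem_powerset, Finset.mem_biUnion, Finset.mem_range,
      Finset.mem_powersetCard]
    constructor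
    · rintro ⟨h1, h2⟩; exact ⟨s.card, h2, h1, rfl⟩
    · rintro ⟨j, hj, h1, rfl⟩; exact ⟨h1, hj⟩
  rw [hset, Finset.sum_biUnion]
  · refine Finset.sum_congr rfl (fun j _ => ?_)
    rw [Finset.sum_congr rfl (fun s hs => by
      rw [(Finset.mem_powersetCard.mp hs).2]), Finset.sum_const, Finset.card_powersetCard]
  · intro i _ j _ hij
    refine Finset.disjoint_left.mpr (fun s hsi hsj => hij ?_)
    rw [← (Finset.mem_powersetCard.mp hsi).2, ← (Finset.mem_powersetCard.mp hsj).2]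

lemma aux_filter_notMem {α : Type*} [DecidableEq α] (u : Finset α) (a : α) (K : ℕ) :
    u.powerset.filter (fun s => s.card < K ∧ a ∉ s)
      = (u.erase a).powerset.filter (fun s => s.card < K) := by
  ext s
  simp only [Finset.mem_filter, Finset.mem_powerset, Finset.subset_erase]
  tauto

lemma aux_swap {M : Type*} [AddCommMonoid M] (g : ℕ → M) (K : ℕ) :
    ∑ h ∈ Finset.Icc 1 K, ∑ j ∈ Finset.range h, g j
      = ∑ j ∈ Finset.range K, (K - j) • g j := by
  induction K with
  | zero => simp
  | succ K ih =>
    have h1 : Finset.Icc 1 (K + 1) = insert (K + 1) (Finset.Icc 1 K) := by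
      ext i; simp [Finset.mem_Icc]; omega
    rw [h1, Finset.sum_insert (by simp), ih]
    rw [Finset.sum_range_succ (fun j => (K + 1 - j) • g j)]
    have hKK : K + 1 - K = 1 := by omega
    rw [hKK, one_nsmul]
    have : ∀ j ∈ Finset.range K, (K + 1 - j) • g j = g j + (K - j) • g j := by
      intro j hj
      rw [Finset.mem_range] at hj
      have : K + 1 - j = (K - j) + 1 := by omega
      rw [this, succ_nsmul, add_comm]
    rw [Finset.sum_congr rfl this, Finset.sum_add_distrib, Finset.sum_range_succ g]
    abel

lemma aux_choose (N j : ℕ) (h : j < N) :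
    N * (N - 1).choose j = (N - j) * N.choose j := by
  obtain ⟨m, rfl⟩ : ∃ m, N = m + 1 := ⟨N - 1, by omega⟩
  have h1 := Nat.add_one_mul_choose_eq m j
  have h2 := Nat.choose_succ_right_eq (m + 1) j
  simp only [Nat.add_sub_cancel]
  rw [mul_comm (m + 1 - j)]
  calc (m + 1) * m.choose j = (m + 1).choose (j + 1) * (j + 1) := h1
    _ = (m + 1).choose j * (m + 1 - j) := h2

lemma aux_final (N K : ℕ) (hK : 1 ≤ K) (hKN : K ≤ N) (a : ℕ → ℝ) :
    ∑ j ∈ Finset.range K, ((N - 1).choose j) • a j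
      = ((N : ℝ) - K) / N * ∑ j ∈ Finset.range K, (N.choose j) • a j
        + (1 / (N : ℝ)) * ∑ h ∈ Finset.Icc 1 K, ∑ j ∈ Finset.range h, (N.choose j) • a j := by
  rw [aux_swap (fun j => (N.choose j) • a j) K, Finset.mul_sum, Finset.mul_sum,
    ← Finset.sum_add_distrib]
  refine Finset.sum_congr rfl (fun j hj => ?_)
  rw [Finset.mem_range] at hj
  have hjN : j < N := lt_of_lt_of_le hj hKN
  have hN : (N : ℝ) ≠ 0 := by
    have : 0 < N := lt_of_lt_of_le hK hKN
    positivity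
  have key : (N : ℝ) * ((N - 1).choose j : ℝ) = ((N : ℝ) - j) * (N.choose j : ℝ) := by
    have := aux_choose N j hjN
    have hc : ((N - j : ℕ) : ℝ) = (N : ℝ) - j := by
      rw [Nat.cast_sub (le_of_lt hjN)]
    calc (N : ℝ) * ((N - 1).choose j : ℝ) = ((N * (N - 1).choose j : ℕ) : ℝ) := by push_cast; ring
      _ = (((N - j) * N.choose j : ℕ) : ℝ) := by rw [this]
      _ = ((N : ℝ) - j) * (N.choose j : ℝ) := by push_cast [Nat.cast_sub (le_of_lt hjN)]; ring
  simp only [nsmul_eq_mul]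
  have hcKj : ((K - j : ℕ) : ℝ) = (K : ℝ) - j := by rw [Nat.cast_sub (le_of_lt hj)]
  rw [hcKj]
  field_simp
  linear_combination a j * key

end


end AuxLemmas

theorem prob_deadline_lt_min
    {Ω : Type*} [MeasurableSpace Ω] (P : MeasureTheory.Measure Ω) [IsProbabilityMeasure P]
    (N K : ℕ) (hK : 1 ≤ K) (hKN : K ≤ N)
    (μ : MeasureTheory.Measure ℝ) [IsProbabilityMeasure μ] (hμ : ∀ x : ℝ, μ {x} = 0)
    (T : Fin N → Ω → ℝ) (hT : ∀ i, Measurable (T i)) (n : Fin N) (TD : ℝ)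
    (hlaw : MeasureTheory.Measure.map (fun ω i => T i ω) P
      = MeasureTheory.Measure.pi (fun _ : Fin N => μ)) :
    (P {ω | TD < min (orderStat T K ω) (T n ω)}).toReal
      = ((N : ℝ) - K) / N * (P {ω | TD < orderStat T K ω}).toReal
          + (1 / (N : ℝ)) * ∑ h ∈ Finset.Icc 1 K, (P {ω | TD < orderStat T h ω}).toReal := by
  classical
  have hN : 0 < N := lt_of_lt_of_le hK hKN
  set f : Ω → (Fin N → ℝ) := fun ω i => T i ω with hf_def
  have hf : Measurable f := measurable_pi_lambda _ hT
  set a : ℕ → ℝ := fun j => (μ (Set.Iic TD) ^ j * μ (Set.Ioi TD) ^ (N - j)).toReal with ha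
  have key : ∀ (Q : Finset (Fin N) → Prop) (_ : DecidablePred Q),
      (P (f ⁻¹' {x : Fin N → ℝ | Q (Finset.univ.filter (fun i => x i ≤ TD))})).toReal
        = ∑ s ∈ Finset.univ.powerset.filter Q, a s.card := by
    intro Q _
    rw [← Measure.map_apply hf (aux_event_measurable TD Q), hlaw, aux_pi_event μ TD Q,
      ENNReal.toReal_sum]
    intro s _
    exact ENNReal.mul_ne_top (ENNReal.pow_ne_top (measure_ne_top μ _))
      (ENNReal.pow_ne_top (measure_ne_top μ _))
  have hEK : ∀ h : ℕ, 1 ≤ h → h ≤ N →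
      {ω | TD < orderStat T h ω}
        = f ⁻¹' {x : Fin N → ℝ | (Finset.univ.filter (fun i => x i ≤ TD)).card < h} := by
    intro h h1 h2
    ext ω
    simp only [Set.mem_setOf_eq, Set.mem_preimage]
    exact aux_orderStat_gt_iff h1 h2 (fun i => T i ω) TD
  have hE1 : {ω | TD < min (orderStat T K ω) (T n ω)}
      = f ⁻¹' {x : Fin N → ℝ | (Finset.univ.filter (fun i => x i ≤ TD)).card < K
          ∧ n ∉ Finset.univ.filter (fun i => x i ≤ TD)} := by
    ext ω
    simp only [Set.mem_setOf_eq, Set.mem_preimage, lt_min_iff, Finset.mem_filter,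
      Finset.mem_univ, true_and, not_le]
    constructor
    · rintro ⟨h1, h2⟩
      exact ⟨(aux_orderStat_gt_iff hK hKN (fun i => T i ω) TD).mp h1, h2⟩
    · rintro ⟨h1, h2⟩
      exact ⟨(aux_orderStat_gt_iff hK hKN (fun i => T i ω) TD).mpr h1, h2⟩
  rw [hE1, hEK K hK hKN,
    key (fun s => s.card < K ∧ n ∉ s) (fun s => inferInstance),
    key (fun s => s.card < K) (fun s => inferInstance)]
  have hIcc : ∑ h ∈ Finset.Icc 1 K, (P {ω | TD < orderStat T h ω}).toReal
      = ∑ h ∈ Finset.Icc 1 K, ∑ j ∈ Finset.range h, (N.choose j) • a j := by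
    refine Finset.sum_congr rfl (fun h hh => ?_)
    rw [Finset.mem_Icc] at hh
    rw [hEK h hh.1 (le_trans hh.2 hKN), key (fun s => s.card < h) (fun s => inferInstance),
      aux_sum_card_lt Finset.univ h a, Finset.card_univ, Fintype.card_fin]
  rw [hIcc, aux_filter_notMem Finset.univ n K,
    aux_sum_card_lt (Finset.univ.erase n) K a, aux_sum_card_lt Finset.univ K a,
    Finset.card_univ, Fintype.card_fin,
    Finset.card_erase_of_mem (Finset.mem_univ n), Finset.card_univ, Fintype.card_fin]
  exact aux_final N K hK hKN a
end
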